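/- arXiv:0712.4001 — 4 statements merged into one kernel-verified Lean document; each statement's English description precedes it below -/
import Mathlib

section
/- There exists a constant C ≥ 0, depending only on m, ω, k₀,…,k_m, l₀,…,l_m, l_J, m₀,…,m_m, m_J and I₀, with the following property. Let ε ∈ (0, ω/4), γ ∈ ℝ, h ∈ ℤ, and φ ∈ Ω satisfy: (i) |θ_{i+h} − θ_i − γ| < ε for all i ∈ ℤ; (ii) ‖φ(t + γ) − φ(t)‖ < ε for every t ∈ ℝ with |t − θ_i| > ε for all i ∈ ℤ; (iii) ‖φ(θ_{i+h}) − φ(θ_i)‖ < ε for all i ∈ ℤ. Then for every t ∈ ℝ with |t − θ_i| > ε for all i ∈ ℤ, one has ‖(Tφ)(t + γ) − (Tφ)(t)‖ ≤ C·ε. (This is the key almost-period transfer estimate in the proof of assertion 3 of Theorem 1, on discontinuous almost periodic solutions.) -/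
/-- The Euclidean norm on `Fin n → ℝ`. -/
noncomputable def eNorm {n : ℕ} (v : Fin n → ℝ) : ℝ := Real.sqrt (∑ j, v j ^ 2)

/-- The operator `T` of the paper: coordinate `0` (the systemic arterial pressure) gets
`(Tφ)₀(t) = −∫_{−∞}^t e^{−k₀(t−s)} g₀(φ₀(s)−φ₁(s),…,φ₀(s)−φ_m(s)) ds
  + Σ_{θ_i < t} e^{−k₀(t−θ_i)} (I₀ + J₀(φ₀(θ_i)))`,
and the compartment coordinates `j = 1,…,m` (nonzero indices of `Fin (m+1)`) get
`(Tφ)_j(t) = ∫_{−∞}^t e^{−k_j(t−s)} g_j(φ₀(s)−φ_j(s)) ds`. -/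
noncomputable def Tmap (m : ℕ) (θ : ℤ → ℝ) (k : Fin (m + 1) → ℝ) (I₀ : ℝ)
    (g₀ : (Fin m → ℝ) → ℝ) (g : Fin (m + 1) → ℝ → ℝ) (J₀ : ℝ → ℝ)
    (φ : ℝ → Fin (m + 1) → ℝ) : ℝ → Fin (m + 1) → ℝ := fun t j =>
  if j = 0 then
    -(∫ s in Set.Iic t, Real.exp (-(k 0) * (t - s)) * g₀ (fun i => φ s 0 - φ s i.succ))
      + ∑' i : ℤ, (if θ i < t then Real.exp (-(k 0) * (t - θ i)) * (I₀ + J₀ (φ (θ i) 0)) else 0)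
  else
    ∫ s in Set.Iic t, Real.exp (-(k j) * (t - s)) * g j (φ s 0 - φ s j)

/-- The set `Ω`: bounded measurable functions `φ : ℝ → ℝ^{m+1}` with
`|φ₀(t)| ≤ m₀/k₀ + (I₀ + m_J)·e^{k₀ω}/(1 − e^{−k₀ω})` and `|φ_j(t)| ≤ m_j/k_j`. -/
def OmegaSet (m : ℕ) (ω : ℝ) (k mc : Fin (m + 1) → ℝ) (I₀ mJ : ℝ) :
    Set (ℝ → Fin (m + 1) → ℝ) :=
  {φ | Measurable φ ∧ (∃ B, ∀ t, eNorm (φ t) ≤ B) ∧ ∀ t,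
    |φ t 0| ≤ mc 0 / k 0 + (I₀ + mJ) * Real.exp (k 0 * ω) / (1 - Real.exp (-(k 0) * ω)) ∧
    ∀ j, j ≠ 0 → |φ t j| ≤ mc j / k j}

open MeasureTheory Real Set

lemma eNorm_nonneg {n : ℕ} (v : Fin n → ℝ) : 0 ≤ eNorm v := Real.sqrt_nonneg _

lemma abs_le_eNorm {n : ℕ} (v : Fin n → ℝ) (j : Fin n) : |v j| ≤ eNorm v := by
  rw [eNorm, ← Real.sqrt_sq_eq_abs]
  exact Real.sqrt_le_sqrt (Finset.single_le_sum (f := fun i => v i ^ 2)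
    (fun i _ => sq_nonneg _) (Finset.mem_univ j))

lemma eNorm_le_sum {n : ℕ} (v : Fin n → ℝ) : eNorm v ≤ ∑ j, |v j| := by
  rw [eNorm]
  have h : ∑ j, v j ^ 2 ≤ (∑ j, |v j|) ^ 2 := by
    rw [sq, Finset.sum_mul]
    apply Finset.sum_le_sum; intro j _
    rw [← sq_abs, sq]
    exact mul_le_mul_of_nonneg_left
      (Finset.single_le_sum (fun i _ => abs_nonneg (v i)) (Finset.mem_univ j)) (abs_nonneg _)
  calc Real.sqrt (∑ j, v j ^ 2) ≤ Real.sqrt ((∑ j, |v j|) ^ 2) := Real.sqrt_le_sqrt h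
    _ = ∑ j, |v j| := Real.sqrt_sq (Finset.sum_nonneg fun i _ => abs_nonneg _)

lemma abs_exp_sub_one_le' (x : ℝ) : |Real.exp x - 1| ≤ |x| * Real.exp |x| := by
  have h2 : Real.exp (-x) * Real.exp x = 1 := by
    rw [← Real.exp_add]; simp
  rcases le_or_gt 0 x with hx | hx
  · rw [abs_of_nonneg hx, abs_of_nonneg (by nlinarith [Real.add_one_le_exp x] : (0:ℝ) ≤ Real.exp x - 1)]
    have h := Real.add_one_le_exp (-x)
    nlinarith [Real.exp_pos x]
  · rw [abs_of_neg hx, abs_of_nonpos (by simp [Real.exp_le_one_iff]; linarith : Real.exp x - 1 ≤ 0)]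
    have h := Real.add_one_le_exp x
    have h1 : 1 ≤ Real.exp (-x) := Real.one_le_exp (by linarith)
    nlinarith

lemma geom_bound (ω : ℝ) (hω : 0 < ω) (θ : ℤ → ℝ)
    (hθ : ∀ i : ℤ, (i:ℝ) * ω ≤ θ i ∧ θ i < ((i:ℝ)+1) * ω)
    (k : ℝ) (hk : 0 < k) (t c : ℝ) :
    Summable (fun i : ℤ => if θ i < t + c then Real.exp (-k * (t - θ i)) else 0) ∧
    ∑' i : ℤ, (if θ i < t + c then Real.exp (-k * (t - θ i)) else 0)
      ≤ Real.exp (k * (c + ω)) / (1 - Real.exp (-(k * ω))) := by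
  set F : ℤ → ℝ := fun i => if θ i < t + c then Real.exp (-k * (t - θ i)) else 0 with hF
  set N : ℤ := ⌈(t + c) / ω⌉ with hN
  set r : ℝ := Real.exp (-(k * ω)) with hr
  set A : ℝ := Real.exp (k * (c + ω)) with hA
  have hr0 : 0 ≤ r := (Real.exp_pos _).le
  have hr1 : r < 1 := Real.exp_lt_one_iff.mpr (by nlinarith)
  have e : ℕ → ℤ := fun n => N - 1 - n
  have he : Function.Injective (fun n : ℕ => N - 1 - (n : ℤ)) := by
    intro a b hab; simpa using hab
  have hsupp : ∀ i ∉ Set.range (fun n : ℕ => N - 1 - (n : ℤ)), F i = 0 := by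
    intro i hi
    rw [hF]
    simp only []
    rw [if_neg]
    intro hcon
    apply hi
    have h1 : (i : ℝ) * ω ≤ θ i := (hθ i).1
    have h2 : (i : ℝ) * ω < t + c := lt_of_le_of_lt h1 hcon
    have h3 : (i : ℝ) < (t + c) / ω := by
      rw [lt_div_iff₀ hω]; linarith
    have h5 : i ≤ N - 1 := by
      by_contra hcon2
      have h6 : ((t + c) / ω : ℝ) ≤ (N : ℝ) := Int.le_ceil _
      have h7 : (N : ℝ) ≤ (i : ℝ) := by exact_mod_cast (by omega : N ≤ i)
      linarith
    exact ⟨(N - 1 - i).toNat, by simp only; omega⟩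
  have hbound : ∀ n : ℕ, F (N - 1 - (n : ℤ)) ≤ A * r ^ n := by
    intro n
    have hAr : 0 ≤ A * r ^ n := by positivity
    rw [hF]
    simp only []
    split_ifs with hc
    · have h1 : θ (N - 1 - (n:ℤ)) < ((N : ℝ) - (n:ℝ)) * ω := by
        have := (hθ (N - 1 - (n:ℤ))).2
        push_cast at this ⊢
        linarith
      have hNt : (N : ℝ) * ω ≤ t + c + ω := by
        have h := Int.ceil_lt_add_one ((t + c) / ω)
        have : (N : ℝ) < (t + c) / ω + 1 := by exact_mod_cast h
        calc (N:ℝ) * ω ≤ ((t+c)/ω + 1) * ω := by nlinarith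
          _ = t + c + ω := by field_simp
      calc Real.exp (-k * (t - θ (N - 1 - (n:ℤ)))) ≤ Real.exp (-k * (t - ((N:ℝ)-(n:ℝ)) * ω)) := by
            apply Real.exp_le_exp.mpr; nlinarith
        _ = Real.exp (k * ((N:ℝ) * ω - t)) * Real.exp ((n:ℝ) * (-(k * ω))) := by
            rw [← Real.exp_add]; ring_nf
        _ ≤ A * r ^ n := by
            rw [hA, hr, ← Real.exp_nat_mul]
            apply mul_le_mul_of_nonneg_right _ (Real.exp_pos _).le
            apply Real.exp_le_exp.mpr
            nlinarith
    · exact hAr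
  have hgeom : Summable (fun n : ℕ => A * r ^ n) :=
    (summable_geometric_of_lt_one hr0 hr1).mul_left A
  have hFe : Summable (fun n : ℕ => F (N - 1 - (n : ℤ))) := by
    apply Summable.of_nonneg_of_le _ hbound hgeom
    intro n; rw [hF]; simp only []; split_ifs; exacts [(Real.exp_pos _).le, le_rfl]
  have hFsum : Summable F := (he.summable_iff (fun x hx => hsupp x hx)).mp hFe
  refine ⟨hFsum, ?_⟩
  rw [← he.tsum_eq (Function.support_subset_iff'.mpr hsupp)]
  calc ∑' n : ℕ, F (N - 1 - (n:ℤ)) ≤ ∑' n : ℕ, A * r ^ n := Summable.tsum_le_tsum hbound hFe hgeom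
    _ = A * (1 - r)⁻¹ := by rw [tsum_mul_left, tsum_geometric_of_lt_one hr0 hr1]
    _ = A / (1 - r) := by rw [div_eq_mul_inv]

lemma shift_Iic (f : ℝ → ℝ) (t γ : ℝ) :
    ∫ s in Set.Iic (t + γ), f s = ∫ s in Set.Iic t, f (s + γ) := by
  rw [← integral_indicator measurableSet_Iic, ← integral_indicator measurableSet_Iic,
    ← integral_add_right_eq_self (fun x => (Set.Iic (t + γ)).indicator f x) γ]
  congr 1
  ext s
  by_cases hs : s ≤ t
  · rw [Set.indicator_of_mem (by simp [hs] : s + γ ∈ Set.Iic (t + γ)),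
      Set.indicator_of_mem (by simp [hs] : s ∈ Set.Iic t)]
  · rw [Set.indicator_of_notMem (by simp [hs] : s + γ ∉ Set.Iic (t + γ)),
      Set.indicator_of_notMem (by simp [hs] : s ∉ Set.Iic t)]

lemma exp_integrableOn (k t : ℝ) (hk : 0 < k) :
    IntegrableOn (fun s => Real.exp (-k * (t - s))) (Set.Iic t) volume := by
  have h1 : Integrable ((Set.Ioi (0:ℝ)).indicator fun x => Real.exp (-(k * x))) volume := by
    rw [integrable_indicator_iff measurableSet_Ioi]
    have := exp_neg_integrableOn_Ioi 0 hk
    simpa [neg_mul] using this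
  have h2 : Integrable (fun s => ((Set.Ioi (0:ℝ)).indicator fun x => Real.exp (-(k * x))) (t - s)) volume :=
    h1.comp_sub_left t
  rw [← integrable_indicator_iff measurableSet_Iic]
  apply h2.congr
  have ht : ∀ᵐ s : ℝ, s ≠ t := by
    rw [ae_iff]
    simp only [ne_eq, not_not, Set.setOf_eq_eq_singleton]
    exact Real.volume_singleton
  filter_upwards [ht] with s hs
  by_cases h : s < t
  · rw [Set.indicator_of_mem (by simp [sub_pos.mpr h]), Set.indicator_of_mem (by simp [h.le])]
    ring_nf
  · have h' : t < s := lt_of_le_of_ne (not_lt.mp h) (Ne.symm hs)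
    rw [Set.indicator_of_notMem (by simp [sub_nonpos.mpr h'.le]; linarith),
      Set.indicator_of_notMem (by simp [h'])]

lemma exp_integral (k t : ℝ) (hk : 0 < k) :
    ∫ s in Set.Iic t, Real.exp (-k * (t - s)) = 1 / k := by
  have h0 : ∫ s in Set.Iic t, Real.exp (-k * (t - s)) = ∫ s in Set.Iic 0, Real.exp (k * s) := by
    rw [show t = 0 + t by ring, shift_Iic (fun s => Real.exp (-k * (0 + t - s))) 0 t]
    congr 1; ext s; ring_nf
  rw [h0]
  have h1 : ∫ s in Set.Iic 0, Real.exp (k * s) = ∫ x in Set.Ioi (0:ℝ), Real.exp (-(k * x)) := by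
    rw [← neg_zero (G := ℝ), ← integral_comp_neg_Ioi (c := 0) (f := fun s => Real.exp (k * s))]
    congr 1; ext x; rw [neg_zero]; ring_nf
  rw [h1]
  have h2 := integral_comp_mul_left_Ioi (fun u => Real.exp (-u)) 0 hk
  simp only [mul_zero] at h2
  rw [show (fun x => Real.exp (-(k * x))) = fun x => Real.exp (-(k * x)) from rfl]
  calc ∫ x in Set.Ioi (0:ℝ), Real.exp (-(k * x)) = ∫ x in Set.Ioi (0:ℝ), (fun u => Real.exp (-u)) (k * x) := rfl
    _ = k⁻¹ • ∫ x in Set.Ioi (0:ℝ), Real.exp (-x) := h2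
    _ = 1 / k := by
        rw [integral_exp_neg_Ioi_zero, smul_eq_mul]
        field_simp

set_option maxHeartbeats 1000000 in
lemma badset_integral_bound (ω : ℝ) (hω : 0 < ω) (θ : ℤ → ℝ)
    (hθ : ∀ i : ℤ, (i:ℝ) * ω ≤ θ i ∧ θ i < ((i:ℝ)+1) * ω)
    (k : ℝ) (hk : 0 < k) (ε : ℝ) (hε : 0 < ε) (hεω : ε < ω) (t : ℝ) :
    ∫ s in Set.Iic t, Real.exp (-k * (t - s)) *
        (⋃ i : ℤ, Set.Icc (θ i - ε) (θ i + ε)).indicator (fun _ => (1:ℝ)) s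
      ≤ 8 * ε / (1 - Real.exp (-(k * ω))) := by
  set B : Set ℝ := ⋃ i : ℤ, Set.Icc (θ i - ε) (θ i + ε) with hBdef
  have hB : MeasurableSet B := MeasurableSet.iUnion fun i => measurableSet_Icc
  set r : ℝ := Real.exp (-(k * ω)) with hrdef
  have hr0 : 0 ≤ r := (Real.exp_pos _).le
  have hr1 : r < 1 := Real.exp_lt_one_iff.mpr (by nlinarith)
  set f : ℝ → ℝ := fun s => Real.exp (-k * (t - s)) * B.indicator (fun _ => (1:ℝ)) s with hfdef
  set P : ℕ → Set ℝ := fun n => Set.Ioc (t - ((n:ℝ)+1)*ω) (t - (n:ℝ)*ω) with hPdef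
  have hPm : ∀ n, MeasurableSet (P n) := fun n => measurableSet_Ioc
  have hPd : Pairwise (Function.onFun Disjoint P) := by
    have key : ∀ a b : ℕ, a < b → ∀ s, s ∈ P a → s ∈ P b → False := by
      intro a b hab s hsa hsb
      simp only [hPdef, Set.mem_Ioc] at hsa hsb
      have : (a:ℝ) + 1 ≤ (b:ℝ) := by exact_mod_cast hab
      nlinarith [hsa.1, hsb.2]
    intro a b hab
    rcases lt_or_gt_of_ne hab with h' | h'
    · exact Set.disjoint_left.mpr fun s hsa hsb => key a b h' s hsa hsb
    · exact Set.disjoint_left.mpr fun s hsa hsb => key b a h' s hsb hsa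
  have hPU : (⋃ n : ℕ, P n) = Set.Iic t := by
    ext s
    simp only [Set.mem_iUnion, hPdef, Set.mem_Ioc, Set.mem_Iic]
    constructor
    · rintro ⟨n, h1, h2⟩
      nlinarith [Nat.cast_nonneg (α := ℝ) n]
    · intro hs
      have hnn : (0:ℝ) ≤ (t - s) / ω := div_nonneg (by linarith) hω.le
      have h1 : ((⌊(t - s) / ω⌋₊ : ℕ) : ℝ) ≤ (t - s) / ω := Nat.floor_le hnn
      have h2 : (t - s) / ω < ((⌊(t - s) / ω⌋₊ : ℕ) : ℝ) + 1 := Nat.lt_floor_add_one _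
      refine ⟨⌊(t - s) / ω⌋₊, ?_, ?_⟩
      · nlinarith [(div_lt_iff₀ hω).mp h2]
      · nlinarith [(le_div_iff₀ hω).mp h1]
  have hfm : Measurable f := by
    apply Measurable.mul
    · exact (Real.continuous_exp.comp (by continuity)).measurable
    · exact measurable_const.indicator hB
  have hfi : IntegrableOn f (Set.Iic t) volume := by
    apply Integrable.mono' (exp_integrableOn k t hk) hfm.aestronglyMeasurable.restrict
    filter_upwards with s
    rw [hfdef]
    simp only [Real.norm_eq_abs, abs_mul, abs_of_nonneg (Real.exp_pos _).le]
    have : |B.indicator (fun _ => (1:ℝ)) s| ≤ 1 := by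
      rw [Set.indicator]; split_ifs <;> simp
    nlinarith [Real.exp_pos (-k * (t - s)), abs_nonneg (B.indicator (fun _ => (1:ℝ)) s)]
  have hsum : HasSum (fun n => ∫ s in P n, f s) (∫ s in Set.Iic t, f s) := by
    rw [← hPU]
    exact hasSum_integral_iUnion hPm hPd (hPU ▸ hfi)
  -- term bound
  have hterm : ∀ n : ℕ, ∫ s in P n, f s ≤ (8 * ε) * r ^ n := by
    intro n
    set b : ℤ := ⌈t / ω⌉ - n with hbdef
    set Bn : Set ℝ := ⋃ i ∈ Finset.Icc (b - 3) b, Set.Icc (θ i - ε) (θ i + ε) with hBndef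
    have hBnm : MeasurableSet Bn := (Finset.Icc (b-3) b).measurableSet_biUnion fun i _ => measurableSet_Icc
    have hsub : ∀ s ∈ P n, s ∈ B → s ∈ Bn := by
      intro s hsP hsB
      simp only [hBdef, Set.mem_iUnion, Set.mem_Icc] at hsB
      obtain ⟨i, hi1, hi2⟩ := hsB
      simp only [hPdef, Set.mem_Ioc] at hsP
      have hθi1 := (hθ i).1
      have hθi2 := (hθ i).2
      have hceil1 : t / ω ≤ (⌈t / ω⌉ : ℝ) := Int.le_ceil _
      have hceil2 : (⌈t / ω⌉ : ℝ) < t / ω + 1 := Int.ceil_lt_add_one _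
      have hup : i ≤ b := by
        have h1 : (i:ℝ) * ω ≤ θ i := hθi1
        have h2 : θ i ≤ s + ε := by linarith
        have h3 : (i:ℝ) * ω < t - (n:ℝ)*ω + ω := by nlinarith
        have h4 : (i:ℝ) + (n:ℝ) < t / ω + 1 := by
          have h4' : ((i:ℝ) + (n:ℝ)) * ω < (t / ω + 1) * ω := by
            have ht' : (t / ω) * ω = t := by field_simp
            nlinarith
          exact lt_of_mul_lt_mul_right h4' hω.le
        have h5 : (i:ℝ) + (n:ℝ) < (⌈t / ω⌉ : ℝ) + 1 := by linarith
        have h6 : i + (n:ℤ) < ⌈t / ω⌉ + 1 := by exact_mod_cast h5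
        omega
      have hlo : b - 3 ≤ i := by
        have h1 : θ i > t - ((n:ℝ)+1)*ω - ε := by linarith
        have h2 : ((i:ℝ)+1) * ω > t - ((n:ℝ)+2)*ω := by nlinarith
        have h3 : (i:ℝ) + 1 + (n:ℝ) + 2 > t / ω := by
          rw [gt_iff_lt, div_lt_iff₀ hω]; nlinarith
        have h4 : (⌈t / ω⌉ : ℝ) - 1 ≤ t / ω := by linarith
        have h5 : (i:ℝ) + 1 + (n:ℝ) + 2 > (⌈t / ω⌉ : ℝ) - 1 := by linarith
        have h6 : (i:ℤ) + 1 + (n:ℤ) + 2 > ⌈t / ω⌉ - 1 := by exact_mod_cast h5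
        omega
      simp only [hBndef, Set.mem_iUnion, Set.mem_Icc]
      exact ⟨i, by simp [Finset.mem_Icc]; omega, hi1, hi2⟩
    have hvol : volume Bn ≤ ENNReal.ofReal (8 * ε) := by
      calc volume Bn ≤ ∑ i ∈ Finset.Icc (b-3) b, volume (Set.Icc (θ i - ε) (θ i + ε)) :=
            measure_biUnion_finset_le _ _
        _ = ∑ i ∈ Finset.Icc (b-3) b, ENNReal.ofReal (2 * ε) := by
            apply Finset.sum_congr rfl; intro i _
            rw [Real.volume_Icc]; congr 1; ring
        _ = (Finset.Icc (b-3) b).card • ENNReal.ofReal (2*ε) := by rw [Finset.sum_const]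
        _ ≤ ENNReal.ofReal (8 * ε) := by
            have hcard : (Finset.Icc (b-3) b).card = 4 := by
              rw [Int.card_Icc]; omega
            rw [hcard]
            apply le_of_eq
            rw [nsmul_eq_mul, show ((4:ℕ) : ENNReal) = ENNReal.ofReal 4 by simp,
              ← ENNReal.ofReal_mul (by norm_num)]
            congr 1; ring
    calc ∫ s in P n, f s ≤ ∫ s in P n, r ^ n * Bn.indicator (fun _ => (1:ℝ)) s := by
          apply setIntegral_mono_on (hfi.mono_set (by rw [← hPU]; exact Set.subset_iUnion P n))
            (by
              apply Integrable.mono' (integrableOn_const (C := r ^ n) measure_Ioc_lt_top.ne)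
                ((measurable_const.indicator hBnm).const_mul _).aestronglyMeasurable.restrict
              filter_upwards with s
              rw [Real.norm_eq_abs, abs_mul]
              have h1 : |Bn.indicator (fun _ => (1:ℝ)) s| ≤ 1 := by
                rw [Set.indicator]; split_ifs <;> simp
              have h2 : |r ^ n| = r ^ n := abs_of_nonneg (by positivity)
              rw [h2]
              nlinarith [pow_nonneg hr0 n, abs_nonneg (Bn.indicator (fun _ => (1:ℝ)) s)])
            (hPm n)
          intro s hs
          rw [hfdef]
          simp only []
          by_cases hsB : s ∈ B
          · rw [Set.indicator_of_mem hsB, Set.indicator_of_mem (hsub s hs hsB)]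
            simp only [mul_one]
            rw [hrdef, ← Real.exp_nat_mul]
            apply Real.exp_le_exp.mpr
            simp only [hPdef, Set.mem_Ioc] at hs
            nlinarith [hs.2]
          · rw [Set.indicator_of_notMem hsB, mul_zero]
            exact mul_nonneg (pow_nonneg hr0 n) (Set.indicator_nonneg (fun _ _ => zero_le_one) s)
      _ = r ^ n * ∫ s in P n, Bn.indicator (fun _ => (1:ℝ)) s := by rw [integral_const_mul]
      _ ≤ r ^ n * (8 * ε) := by
          apply mul_le_mul_of_nonneg_left _ (pow_nonneg hr0 n)
          rw [setIntegral_indicator hBnm]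
          rw [setIntegral_const, smul_eq_mul, mul_one]
          have h1 : volume (P n ∩ Bn) ≤ ENNReal.ofReal (8 * ε) :=
            le_trans (measure_mono Set.inter_subset_right) hvol
          calc (volume (P n ∩ Bn)).toReal ≤ (ENNReal.ofReal (8 * ε)).toReal :=
                ENNReal.toReal_mono ENNReal.ofReal_ne_top h1
            _ = 8 * ε := ENNReal.toReal_ofReal (by positivity)
      _ = (8 * ε) * r ^ n := by ring
  have hgeom : HasSum (fun n : ℕ => (8 * ε) * r ^ n) ((8 * ε) * (1 - r)⁻¹) :=
    (hasSum_geometric_of_lt_one hr0 hr1).mul_left _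
  have := hasSum_le hterm hsum hgeom
  calc ∫ s in Set.Iic t, f s ≤ (8 * ε) * (1 - r)⁻¹ := this
    _ = 8 * ε / (1 - r) := by rw [div_eq_mul_inv]

set_option maxHeartbeats 1000000 in
lemma master_bound (ω : ℝ) (hω : 0 < ω) (θ : ℤ → ℝ)
    (hθ : ∀ i : ℤ, (i:ℝ) * ω ≤ θ i ∧ θ i < ((i:ℝ)+1) * ω)
    (k : ℝ) (hk : 0 < k) (ε : ℝ) (hε : 0 < ε) (hεω : ε < ω) (t : ℝ) (M δ : ℝ)
    (hM : 0 ≤ M) (hδ : 0 ≤ δ)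
    (F : ℝ → ℝ) (hFm : Measurable F) (hFbd : ∀ s, |F s| ≤ 2 * M)
    (hFgood : ∀ s : ℝ, (∀ i : ℤ, ε < |s - θ i|) → |F s| ≤ δ) :
    |∫ s in Set.Iic t, Real.exp (-k * (t - s)) * F s|
      ≤ δ / k + 2 * M * (8 * ε / (1 - Real.exp (-(k * ω)))) := by
  set B : Set ℝ := ⋃ i : ℤ, Set.Icc (θ i - ε) (θ i + ε) with hBdef
  have hB : MeasurableSet B := MeasurableSet.iUnion fun i => measurableSet_Icc
  have hnotB : ∀ s : ℝ, s ∉ B → ∀ i : ℤ, ε < |s - θ i| := by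
    intro s hs i
    simp only [hBdef, Set.mem_iUnion, Set.mem_Icc, not_exists, not_and, not_le] at hs
    rcases lt_or_ge s (θ i - ε) with h | h
    · rw [lt_abs]; right; linarith
    · have := hs i h; rw [lt_abs]; left; linarith
  have hexpm : Measurable fun s : ℝ => Real.exp (-k * (t - s)) :=
    (Real.continuous_exp.comp (by continuity)).measurable
  have hintF : IntegrableOn (fun s => Real.exp (-k * (t - s)) * F s) (Set.Iic t) volume := by
    apply Integrable.mono' ((exp_integrableOn k t hk).const_mul (2 * M))
    · exact (hexpm.mul hFm).aestronglyMeasurable.restrict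
    · filter_upwards with s
      rw [Real.norm_eq_abs, abs_mul, abs_of_nonneg (Real.exp_pos _).le]
      calc Real.exp (-k * (t - s)) * |F s| ≤ Real.exp (-k * (t - s)) * (2 * M) :=
            mul_le_mul_of_nonneg_left (hFbd s) (Real.exp_pos _).le
        _ = 2 * M * Real.exp (-k * (t - s)) := by ring
  have hindm : Measurable fun s : ℝ => B.indicator (fun _ => (1:ℝ)) s :=
    measurable_const.indicator hB
  have hg2int : IntegrableOn
      (fun s => Real.exp (-k * (t - s)) * B.indicator (fun _ => (1:ℝ)) s) (Set.Iic t) volume := by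
    apply Integrable.mono' (exp_integrableOn k t hk)
    · exact (hexpm.mul hindm).aestronglyMeasurable.restrict
    · filter_upwards with s
      rw [Real.norm_eq_abs, abs_mul, abs_of_nonneg (Real.exp_pos _).le]
      have h1 : |B.indicator (fun _ => (1:ℝ)) s| ≤ 1 := by
        rw [Set.indicator]; split_ifs <;> simp
      nlinarith [Real.exp_pos (-k * (t - s)), abs_nonneg (B.indicator (fun _ => (1:ℝ)) s)]
  set g : ℝ → ℝ := fun s => δ * Real.exp (-k * (t - s))
    + 2 * M * (Real.exp (-k * (t - s)) * B.indicator (fun _ => (1:ℝ)) s) with hgdef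
  have hgint : IntegrableOn g (Set.Iic t) volume :=
    ((exp_integrableOn k t hk).const_mul δ).add (hg2int.const_mul (2 * M))
  have hpt : ∀ s : ℝ, |Real.exp (-k * (t - s)) * F s| ≤ g s := by
    intro s
    rw [abs_mul, abs_of_nonneg (Real.exp_pos _).le, hgdef]
    simp only []
    by_cases hsB : s ∈ B
    · rw [Set.indicator_of_mem hsB]
      have := hFbd s
      nlinarith [Real.exp_pos (-k * (t - s))]
    · rw [Set.indicator_of_notMem hsB]
      have := hFgood s (hnotB s hsB)
      nlinarith [Real.exp_pos (-k * (t - s))]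
  calc |∫ s in Set.Iic t, Real.exp (-k * (t - s)) * F s|
      ≤ ∫ s in Set.Iic t, |Real.exp (-k * (t - s)) * F s| := by
        have := norm_integral_le_integral_norm (μ := volume.restrict (Set.Iic t))
            (fun s => Real.exp (-k * (t - s)) * F s)
        simpa only [Real.norm_eq_abs] using this
    _ ≤ ∫ s in Set.Iic t, g s := integral_mono hintF.abs hgint hpt
    _ = δ * (∫ s in Set.Iic t, Real.exp (-k * (t - s)))
        + 2 * M * (∫ s in Set.Iic t, (Real.exp (-k * (t - s)) * B.indicator (fun _ => (1:ℝ)) s)) := by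
        rw [hgdef, integral_add ((exp_integrableOn k t hk).const_mul δ) (hg2int.const_mul (2 * M)),
          integral_const_mul, integral_const_mul]
    _ ≤ δ / k + 2 * M * (8 * ε / (1 - Real.exp (-(k * ω)))) := by
        rw [exp_integral k t hk]
        have h2 := badset_integral_bound ω hω θ hθ k hk ε hε hεω t
        have h3 : 2 * M * (∫ s in Set.Iic t, (Real.exp (-k * (t - s)) * B.indicator (fun _ => (1:ℝ)) s))
            ≤ 2 * M * (8 * ε / (1 - Real.exp (-(k * ω)))) :=
          mul_le_mul_of_nonneg_left h2 (by linarith)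
        have h4 : δ * (1 / k) = δ / k := by ring
        linarith

set_option maxHeartbeats 1000000 in
lemma sum_bound (ω : ℝ) (hω : 0 < ω) (θ : ℤ → ℝ)
    (hθ : ∀ i : ℤ, (i:ℝ) * ω ≤ θ i ∧ θ i < ((i:ℝ)+1) * ω)
    (k0 : ℝ) (hk0 : 0 < k0) (I0 mJ lJ : ℝ) (hI0 : 0 ≤ I0) (hmJ : 0 ≤ mJ) (hlJ : 0 ≤ lJ)
    (J : ℝ → ℝ) (hJbd : ∀ a, |J a| ≤ mJ)
    (ε γ : ℝ) (h : ℤ) (hε : 0 < ε) (hεω : ε < ω)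
    (x : ℤ → ℝ)
    (hyp1 : ∀ i : ℤ, |θ (i + h) - θ i - γ| < ε)
    (hyp3 : ∀ i : ℤ, |J (x (i + h)) - J (x i)| ≤ lJ * ε)
    (t : ℝ) (ht : ∀ i : ℤ, ε < |t - θ i|) :
    |(∑' i : ℤ, if θ i < t + γ then Real.exp (-k0 * (t + γ - θ i)) * (I0 + J (x i)) else 0)
      - (∑' i : ℤ, if θ i < t then Real.exp (-k0 * (t - θ i)) * (I0 + J (x i)) else 0)|
      ≤ (k0 * Real.exp (k0 * ω) * (I0 + mJ) + lJ)
          * (Real.exp (k0 * ω) / (1 - Real.exp (-(k0 * ω)))) * ε := by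
  set K : ℝ := k0 * Real.exp (k0 * ω) * (I0 + mJ) + lJ with hKdef
  have hK0 : 0 ≤ K := by positivity
  set F : ℤ → ℝ := fun i => if θ i < t then Real.exp (-k0 * (t - θ i)) else 0 with hFdef
  have hgeom := geom_bound ω hω θ hθ k0 hk0 t 0
  simp only [add_zero] at hgeom
  have hFsum : Summable F := hgeom.1
  have hFbd : ∑' i, F i ≤ Real.exp (k0 * (0 + ω)) / (1 - Real.exp (-(k0 * ω))) := hgeom.2
  have hFnn : ∀ i, 0 ≤ F i := by
    intro i; rw [hFdef]; simp only []; split_ifs; exacts [(Real.exp_pos _).le, le_rfl]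
  set A : ℤ → ℝ := fun i =>
    if θ i < t then Real.exp (-k0 * (t + γ - θ (i + h))) * (I0 + J (x (i + h))) else 0 with hAdef
  set B : ℤ → ℝ := fun i =>
    if θ i < t then Real.exp (-k0 * (t - θ i)) * (I0 + J (x i)) else 0 with hBdef
  have key : ∀ i : ℤ, (θ (i + h) < t + γ ↔ θ i < t) := by
    intro i
    have h1 := hyp1 i
    have h2 := ht i
    rw [abs_sub_lt_iff] at h1
    rw [lt_abs] at h2
    constructor
    · intro hc
      rcases h2 with h2 | h2
      · linarith
      · exfalso; linarith
    · intro hc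
      rcases h2 with h2 | h2
      · linarith
      · exfalso; linarith
  have habs : ∀ a : ℝ, |I0 + J a| ≤ I0 + mJ := by
    intro a
    calc |I0 + J a| ≤ |I0| + |J a| := abs_add_le _ _
      _ ≤ I0 + mJ := by rw [abs_of_nonneg hI0]; linarith [hJbd a]
  -- first tsum equals ∑' A
  have hre : (∑' i : ℤ, if θ i < t + γ then Real.exp (-k0 * (t + γ - θ i)) * (I0 + J (x i)) else 0)
      = ∑' i, A i := by
    rw [← Equiv.tsum_eq (Equiv.addRight h)
      (fun i => if θ i < t + γ then Real.exp (-k0 * (t + γ - θ i)) * (I0 + J (x i)) else 0)]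
    apply tsum_congr
    intro i
    simp only [Equiv.coe_addRight, hAdef]
    by_cases hc : θ i < t
    · rw [if_pos hc]; exact if_pos ((key i).mpr hc)
    · rw [if_neg hc]; exact if_neg (fun hh => hc ((key i).mp hh))
  -- termwise bound
  have hterm : ∀ i : ℤ, |A i - B i| ≤ K * ε * F i := by
    intro i
    rw [hAdef, hBdef, hFdef]
    simp only []
    by_cases hc : θ i < t
    · rw [if_pos hc, if_pos hc, if_pos hc]
      set a : ℝ := Real.exp (-k0 * (t - θ i)) with hadef
      have ha0 : 0 < a := Real.exp_pos _
      set d : ℝ := γ - (θ (i + h) - θ i) with hddef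
      have hd : |d| < ε := by
        have := hyp1 i
        rw [show θ (i + h) - θ i - γ = -(γ - (θ (i+h) - θ i)) by ring, abs_neg] at this
        exact this
      have hsplit : Real.exp (-k0 * (t + γ - θ (i + h))) = a * Real.exp (-k0 * d) := by
        rw [hadef, ← Real.exp_add]; congr 1; rw [hddef]; ring
      rw [hsplit]
      have step : a * Real.exp (-k0 * d) * (I0 + J (x (i + h))) - a * (I0 + J (x i))
          = a * ((Real.exp (-k0 * d) - 1) * (I0 + J (x (i + h))) + (J (x (i + h)) - J (x i))) := by
        ring
      rw [step, abs_mul, abs_of_pos ha0, mul_comm (K * ε) a]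
      apply mul_le_mul_of_nonneg_left _ ha0.le
      calc |(Real.exp (-k0 * d) - 1) * (I0 + J (x (i + h))) + (J (x (i + h)) - J (x i))|
          ≤ |Real.exp (-k0 * d) - 1| * |I0 + J (x (i + h))| + |J (x (i + h)) - J (x i)| := by
            refine le_trans (abs_add_le _ _) ?_
            rw [abs_mul]
        _ ≤ (|(-k0 * d)| * Real.exp |(-k0 * d)|) * (I0 + mJ) + lJ * ε := by
            apply add_le_add
            · exact mul_le_mul (abs_exp_sub_one_le' _) (habs _)
                (abs_nonneg _) (by positivity)
            · exact hyp3 i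
        _ ≤ (k0 * ε * Real.exp (k0 * ω)) * (I0 + mJ) + lJ * ε := by
            refine add_le_add ?_ le_rfl
            apply mul_le_mul_of_nonneg_right _ (by linarith [hJbd (x (i+h))] : (0:ℝ) ≤ I0 + mJ)
            have h1 : |(-k0 * d)| = k0 * |d| := by
              rw [abs_mul, abs_neg, abs_of_pos hk0]
            rw [h1]
            have h2 : k0 * |d| ≤ k0 * ε := by nlinarith
            have h3 : Real.exp (k0 * |d|) ≤ Real.exp (k0 * ω) :=
              Real.exp_le_exp.mpr (by nlinarith)
            exact mul_le_mul h2 h3 (Real.exp_pos _).le (by positivity)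
        _ = K * ε := by rw [hKdef]; ring
    · rw [if_neg hc, if_neg hc, if_neg hc]
      simp [hK0]
  have hAabs : ∀ i, |A i| ≤ (I0 + mJ) * Real.exp (k0 * ω) * F i := by
    intro i
    rw [hAdef, hFdef]
    simp only []
    by_cases hc : θ i < t
    · rw [if_pos hc, if_pos hc]
      set d : ℝ := γ - (θ (i + h) - θ i) with hddef
      have hd : |d| < ε := by
        have := hyp1 i
        rw [show θ (i + h) - θ i - γ = -(γ - (θ (i+h) - θ i)) by ring, abs_neg] at this
        exact this
      have hsplit : Real.exp (-k0 * (t + γ - θ (i + h)))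
          = Real.exp (-k0 * (t - θ i)) * Real.exp (-k0 * d) := by
        rw [← Real.exp_add]; congr 1; rw [hddef]; ring
      rw [abs_mul, hsplit]
      have h1 : Real.exp (-k0 * d) ≤ Real.exp (k0 * ω) := by
        apply Real.exp_le_exp.mpr
        have := abs_le.mp hd.le
        nlinarith
      have h2 := habs (x (i + h))
      have e0 := Real.exp_pos (-k0 * (t - θ i))
      have e1 := Real.exp_pos (-k0 * d)
      rw [abs_of_pos (by positivity : (0:ℝ) < Real.exp (-k0 * (t - θ i)) * Real.exp (-k0 * d))]
      calc Real.exp (-k0 * (t - θ i)) * Real.exp (-k0 * d) * |I0 + J (x (i + h))|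
          ≤ Real.exp (-k0 * (t - θ i)) * Real.exp (k0 * ω) * (I0 + mJ) := by
            apply mul_le_mul
            · exact mul_le_mul_of_nonneg_left h1 e0.le
            · exact h2
            · exact abs_nonneg _
            · positivity
        _ = (I0 + mJ) * Real.exp (k0 * ω) * Real.exp (-k0 * (t - θ i)) := by ring
    · rw [if_neg hc, if_neg hc]; simp
  have hBabs : ∀ i, |B i| ≤ (I0 + mJ) * F i := by
    intro i
    rw [hBdef, hFdef]
    simp only []
    by_cases hc : θ i < t
    · rw [if_pos hc, if_pos hc, abs_mul, abs_of_pos (Real.exp_pos _), mul_comm]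
      exact mul_le_mul_of_nonneg_right (habs _) (Real.exp_pos _).le
    · rw [if_neg hc, if_neg hc]; simp
  have hAsum : Summable A := by
    apply Summable.of_abs
    exact Summable.of_nonneg_of_le (fun i => abs_nonneg _) hAabs
      ((hFsum.mul_left _))
  have hBsum : Summable B := by
    apply Summable.of_abs
    exact Summable.of_nonneg_of_le (fun i => abs_nonneg _) hBabs ((hFsum.mul_left _))
  have hABsum : Summable (fun i => |A i - B i|) :=
    Summable.of_nonneg_of_le (fun i => abs_nonneg _) hterm ((hFsum.mul_left _))
  rw [hre, ← Summable.tsum_sub hAsum hBsum]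
  calc |∑' i, (A i - B i)| ≤ ∑' i, |A i - B i| := by
        simpa [Real.norm_eq_abs] using norm_tsum_le_tsum_norm (f := fun i => A i - B i) hABsum
    _ ≤ ∑' i, K * ε * F i := Summable.tsum_le_tsum hterm hABsum (hFsum.mul_left _)
    _ = K * ε * ∑' i, F i := tsum_mul_left
    _ ≤ K * ε * (Real.exp (k0 * (0 + ω)) / (1 - Real.exp (-(k0 * ω)))) := by
        apply mul_le_mul_of_nonneg_left hFbd (by positivity)
    _ = K * (Real.exp (k0 * ω) / (1 - Real.exp (-(k0 * ω)))) * ε := by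
        rw [zero_add]; ring

lemma bddmul_integrable (k t : ℝ) (hk : 0 < k) (G : ℝ → ℝ) (hGm : Measurable G)
    (M : ℝ) (hGbd : ∀ s, |G s| ≤ M) :
    MeasureTheory.IntegrableOn (fun s => Real.exp (-k * (t - s)) * G s) (Set.Iic t)
      MeasureTheory.volume := by
  have hexpm : Measurable fun s : ℝ => Real.exp (-k * (t - s)) :=
    (Real.continuous_exp.comp (by continuity)).measurable
  apply MeasureTheory.Integrable.mono' ((exp_integrableOn k t hk).const_mul M)
  · exact (hexpm.mul hGm).aestronglyMeasurable.restrict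
  · filter_upwards with s
    rw [Real.norm_eq_abs, abs_mul, abs_of_nonneg (Real.exp_pos _).le]
    calc Real.exp (-k * (t - s)) * |G s| ≤ Real.exp (-k * (t - s)) * M :=
          mul_le_mul_of_nonneg_left (hGbd s) (Real.exp_pos _).le
      _ = M * Real.exp (-k * (t - s)) := by ring

lemma absSubLe (a b : ℝ) : |a - b| ≤ |a| + |b| := by
  rw [sub_eq_add_neg]
  exact (abs_add_le _ _).trans (le_of_eq (by rw [abs_neg]))


set_option maxHeartbeats 4000000 in
/-- There exists a constant `C ≥ 0`, depending only on the data
`m, ω, k, l, l_J, m₀,…,m_m, m_J, I₀`, such that for every `ε ∈ (0, ω/4)`, `γ ∈ ℝ`, `h ∈ ℤ`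
and `φ ∈ Ω` satisfying the almost-period hypotheses (i)–(iii), one has
`‖(Tφ)(t + γ) − (Tφ)(t)‖ ≤ C·ε` whenever `|t − θ_i| > ε` for all `i`
(the almost-period transfer estimate, Theorem 1, assertion 3). -/
theorem stmt8
    (m : ℕ) (hm : 1 ≤ m) (ω : ℝ) (hω : 0 < ω) (θ : ℤ → ℝ)
    (hθ : ∀ i : ℤ, (i : ℝ) * ω ≤ θ i ∧ θ i < ((i : ℝ) + 1) * ω)
    (k : Fin (m + 1) → ℝ) (hk : ∀ j, 0 < k j) (I₀ : ℝ) (hI : 0 < I₀)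
    (g₀ : (Fin m → ℝ) → ℝ) (g : Fin (m + 1) → ℝ → ℝ) (J₀ : ℝ → ℝ)
    (l : Fin (m + 1) → ℝ) (lJ : ℝ) (mc : Fin (m + 1) → ℝ) (mJ : ℝ)
    (hl : ∀ j, 0 ≤ l j) (hlJ : 0 ≤ lJ) (hmc : ∀ j, 0 ≤ mc j) (hmJ : 0 ≤ mJ)
    (hg₀lip : ∀ z w : Fin m → ℝ, |g₀ z - g₀ w| ≤ l 0 * eNorm (fun i => z i - w i))
    (hglip : ∀ j, j ≠ 0 → ∀ a b : ℝ, |g j a - g j b| ≤ l j * |a - b|)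
    (hJlip : ∀ a b : ℝ, |J₀ a - J₀ b| ≤ lJ * |a - b|)
    (hg₀bd : ∀ z, |g₀ z| ≤ mc 0)
    (hgbd : ∀ j, j ≠ 0 → ∀ a, |g j a| ≤ mc j)
    (hJbd : ∀ a, |J₀ a| ≤ mJ)
 :
    ∃ C : ℝ, 0 ≤ C ∧
      ∀ ε : ℝ, 0 < ε → ε < ω / 4 → ∀ γ : ℝ, ∀ h : ℤ,
      ∀ φ : ℝ → Fin (m + 1) → ℝ, φ ∈ OmegaSet m ω k mc I₀ mJ →
      (∀ i : ℤ, |θ (i + h) - θ i - γ| < ε) →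
      (∀ t : ℝ, (∀ i : ℤ, ε < |t - θ i|) → eNorm (fun j => φ (t + γ) j - φ t j) < ε) →
      (∀ i : ℤ, eNorm (fun j => φ (θ (i + h)) j - φ (θ i) j) < ε) →
      ∀ t : ℝ, (∀ i : ℤ, ε < |t - θ i|) →
        eNorm (fun j => Tmap m θ k I₀ g₀ g J₀ φ (t + γ) j - Tmap m θ k I₀ g₀ g J₀ φ t j) ≤ C * ε := by
  classical
  have hkω : ∀ j : Fin (m+1), 0 < 1 - Real.exp (-(k j * ω)) := by
    intro j
    have h1 : Real.exp (-(k j * ω)) < 1 := Real.exp_lt_one_iff.mpr (by nlinarith [hk j])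
    linarith
  have hm1 : (1:ℝ) ≤ (m:ℝ) := by exact_mod_cast hm
  have hCintnn : ∀ j : Fin (m+1),
      0 ≤ 2 * l j * (m:ℝ) / k j + 16 * mc j / (1 - Real.exp (-(k j * ω))) := by
    intro j
    apply add_nonneg
    · apply div_nonneg _ (hk j).le
      have := hl j; positivity
    · apply div_nonneg _ (hkω j).le
      have := hmc j; positivity
  have hCsumnn : 0 ≤ (k 0 * Real.exp (k 0 * ω) * (I₀ + mJ) + lJ)
      * (Real.exp (k 0 * ω) / (1 - Real.exp (-(k 0 * ω)))) := by
    apply mul_nonneg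
    · apply add_nonneg _ hlJ
      apply mul_nonneg (mul_nonneg (hk 0).le (Real.exp_pos _).le) (by linarith)
    · exact div_nonneg (Real.exp_pos _).le (hkω 0).le
  refine ⟨(∑ j : Fin (m+1), (2 * l j * (m:ℝ) / k j + 16 * mc j / (1 - Real.exp (-(k j * ω)))))
      + (k 0 * Real.exp (k 0 * ω) * (I₀ + mJ) + lJ)
      * (Real.exp (k 0 * ω) / (1 - Real.exp (-(k 0 * ω)))),
    add_nonneg (Finset.sum_nonneg fun j _ => hCintnn j) hCsumnn, ?_⟩
  intro ε hε hεω4 γ h φ hφ hyp1 hyp2 hyp3 t ht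
  have hεω : ε < ω := by linarith
  obtain ⟨hφmeas, -, -⟩ := hφ
  have hφj : ∀ j : Fin (m+1), Measurable fun s => φ s j :=
    fun j => (measurable_pi_apply j).comp hφmeas
  have hφγ : ∀ j : Fin (m+1), Measurable fun s => φ (s + γ) j :=
    fun j => (hφj j).comp (measurable_add_const γ)
  have hδnn : ∀ j : Fin (m+1), 0 ≤ 2 * l j * (m:ℝ) * ε := by
    intro j; have := hl j; positivity
  -- the coordinate claim
  have key : ∀ j : Fin (m+1),
      |Tmap m θ k I₀ g₀ g J₀ φ (t + γ) j - Tmap m θ k I₀ g₀ g J₀ φ t j|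
        ≤ (2 * l j * (m:ℝ) / k j + 16 * mc j / (1 - Real.exp (-(k j * ω)))) * ε
          + (if j = 0 then ((k 0 * Real.exp (k 0 * ω) * (I₀ + mJ) + lJ)
              * (Real.exp (k 0 * ω) / (1 - Real.exp (-(k 0 * ω))))) * ε else 0) := by
    intro j
    by_cases hj : j = 0
    · subst hj
      rw [if_pos rfl]
      -- continuity of g₀
      have hg₀cont : Continuous g₀ := by
        apply LipschitzWith.continuous (K := Real.toNNReal (l 0 * (m:ℝ)))
        apply LipschitzWith.of_dist_le_mul
        intro z w
        rw [Real.coe_toNNReal _ (by have := hl 0; positivity)]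
        calc dist (g₀ z) (g₀ w) = |g₀ z - g₀ w| := Real.dist_eq _ _
          _ ≤ l 0 * eNorm (fun i => z i - w i) := hg₀lip z w
          _ ≤ l 0 * (∑ i, |z i - w i|) :=
              mul_le_mul_of_nonneg_left (eNorm_le_sum _) (hl 0)
          _ ≤ l 0 * (∑ _i : Fin m, dist z w) := by
              apply mul_le_mul_of_nonneg_left _ (hl 0)
              apply Finset.sum_le_sum
              intro i _
              rw [← Real.dist_eq]
              exact dist_le_pi_dist z w i
          _ = l 0 * (m:ℝ) * dist z w := by
              rw [Finset.sum_const, Finset.card_univ, Fintype.card_fin, nsmul_eq_mul]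
              ring
      have hvm : Measurable fun s : ℝ => (fun i : Fin m => φ s 0 - φ s i.succ) :=
        measurable_pi_lambda _ (fun i => (hφj 0).sub (hφj i.succ))
      have hvm' : Measurable fun s : ℝ => (fun i : Fin m => φ (s + γ) 0 - φ (s + γ) i.succ) :=
        measurable_pi_lambda _ (fun i => (hφγ 0).sub (hφγ i.succ))
      set F : ℝ → ℝ := fun s =>
        g₀ (fun i => φ (s + γ) 0 - φ (s + γ) i.succ) - g₀ (fun i => φ s 0 - φ s i.succ) with hFdef
      have hFm : Measurable F :=
        (hg₀cont.measurable.comp hvm').sub (hg₀cont.measurable.comp hvm)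
      have hFbd : ∀ s, |F s| ≤ 2 * mc 0 := by
        intro s
        refine (absSubLe _ _).trans ?_
        linarith [hg₀bd (fun i => φ (s + γ) 0 - φ (s + γ) i.succ),
          hg₀bd (fun i => φ s 0 - φ s i.succ)]
      have hFgood : ∀ s : ℝ, (∀ i : ℤ, ε < |s - θ i|) → |F s| ≤ 2 * l 0 * (m:ℝ) * ε := by
        intro s hgap
        have hnorm := (hyp2 s hgap).le
        have hcomp : ∀ j' : Fin (m+1), |φ (s + γ) j' - φ s j'| ≤ ε :=
          fun j' => le_trans (abs_le_eNorm (fun j'' => φ (s + γ) j'' - φ s j'') j') hnorm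
        calc |F s| ≤ l 0 * eNorm (fun i =>
              (φ (s + γ) 0 - φ (s + γ) i.succ) - (φ s 0 - φ s i.succ)) := hg₀lip _ _
          _ ≤ l 0 * ((m:ℝ) * (2 * ε)) := by
              apply mul_le_mul_of_nonneg_left _ (hl 0)
              refine (eNorm_le_sum _).trans ?_
              calc ∑ i : Fin m, |(φ (s + γ) 0 - φ (s + γ) i.succ) - (φ s 0 - φ s i.succ)|
                  ≤ ∑ _i : Fin m, 2 * ε := by
                    apply Finset.sum_le_sum
                    intro i _
                    rw [show (φ (s + γ) 0 - φ (s + γ) i.succ) - (φ s 0 - φ s i.succ)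
                      = (φ (s + γ) 0 - φ s 0) - (φ (s + γ) i.succ - φ s i.succ) by ring]
                    refine (absSubLe _ _).trans ?_
                    linarith [hcomp 0, hcomp i.succ]
                _ = (m:ℝ) * (2 * ε) := by
                    rw [Finset.sum_const, Finset.card_univ, Fintype.card_fin, nsmul_eq_mul]
          _ = 2 * l 0 * (m:ℝ) * ε := by ring
      -- integral part
      have int1 : MeasureTheory.IntegrableOn
          (fun s => Real.exp (-(k 0) * (t - s)) * g₀ (fun i => φ (s + γ) 0 - φ (s + γ) i.succ))
          (Set.Iic t) MeasureTheory.volume :=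
        bddmul_integrable (k 0) t (hk 0) _ (hg₀cont.measurable.comp hvm') (mc 0)
          (fun s => hg₀bd _)
      have int2 : MeasureTheory.IntegrableOn
          (fun s => Real.exp (-(k 0) * (t - s)) * g₀ (fun i => φ s 0 - φ s i.succ))
          (Set.Iic t) MeasureTheory.volume :=
        bddmul_integrable (k 0) t (hk 0) _ (hg₀cont.measurable.comp hvm) (mc 0)
          (fun s => hg₀bd _)
      have hs1 : (∫ s in Set.Iic (t + γ),
            Real.exp (-(k 0) * (t + γ - s)) * g₀ (fun i => φ s 0 - φ s i.succ))
          = ∫ s in Set.Iic t,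
            Real.exp (-(k 0) * (t - s)) * g₀ (fun i => φ (s + γ) 0 - φ (s + γ) i.succ) := by
        rw [shift_Iic (fun s => Real.exp (-(k 0) * (t + γ - s)) * g₀ (fun i => φ s 0 - φ s i.succ)) t γ]
        congr 1
        funext s
        rw [show -(k 0) * (t + γ - (s + γ)) = -(k 0) * (t - s) by ring]
      have hintbound : |(∫ s in Set.Iic (t + γ),
            Real.exp (-(k 0) * (t + γ - s)) * g₀ (fun i => φ s 0 - φ s i.succ))
          - ∫ s in Set.Iic t,
            Real.exp (-(k 0) * (t - s)) * g₀ (fun i => φ s 0 - φ s i.succ)|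
          ≤ (2 * l 0 * (m:ℝ) / k 0 + 16 * mc 0 / (1 - Real.exp (-(k 0 * ω)))) * ε := by
        rw [hs1, ← MeasureTheory.integral_sub int1 int2]
        simp_rw [← mul_sub]
        refine le_trans (master_bound ω hω θ hθ (k 0) (hk 0) ε hε hεω t (mc 0)
          (2 * l 0 * (m:ℝ) * ε) (hmc 0) (hδnn 0) F hFm hFbd hFgood) ?_
        have hr := hkω 0
        have heq : (2 * l 0 * (m:ℝ) * ε) / k 0
            + 2 * mc 0 * (8 * ε / (1 - Real.exp (-(k 0 * ω))))
            = (2 * l 0 * (m:ℝ) / k 0 + 16 * mc 0 / (1 - Real.exp (-(k 0 * ω)))) * ε := by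
          field_simp
          ring
        linarith [le_of_eq heq]
      -- sum part
      have hyp3' : ∀ i : ℤ, |J₀ (φ (θ (i + h)) 0) - J₀ (φ (θ i) 0)| ≤ lJ * ε := by
        intro i
        have h1 : |φ (θ (i + h)) 0 - φ (θ i) 0| ≤ ε :=
          le_trans (abs_le_eNorm (fun j => φ (θ (i + h)) j - φ (θ i) j) 0) (hyp3 i).le
        exact le_trans (hJlip _ _) (mul_le_mul_of_nonneg_left h1 hlJ)
      have hsumbound := sum_bound ω hω θ hθ (k 0) (hk 0) I₀ mJ lJ hI.le hmJ hlJ J₀ hJbd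
        ε γ h hε hεω (fun i => φ (θ i) 0) hyp1 hyp3' t ht
      -- combine
      simp only [Tmap, if_pos]
      rw [show (-(∫ s in Set.Iic (t + γ),
            Real.exp (-(k 0) * (t + γ - s)) * g₀ (fun i => φ s 0 - φ s i.succ))
          + ∑' i : ℤ, (if θ i < t + γ then
              Real.exp (-(k 0) * (t + γ - θ i)) * (I₀ + J₀ (φ (θ i) 0)) else 0))
          - (-(∫ s in Set.Iic t,
            Real.exp (-(k 0) * (t - s)) * g₀ (fun i => φ s 0 - φ s i.succ))
          + ∑' i : ℤ, (if θ i < t then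
              Real.exp (-(k 0) * (t - θ i)) * (I₀ + J₀ (φ (θ i) 0)) else 0))
          = ((∑' i : ℤ, (if θ i < t + γ then
              Real.exp (-(k 0) * (t + γ - θ i)) * (I₀ + J₀ (φ (θ i) 0)) else 0))
            - ∑' i : ℤ, (if θ i < t then
              Real.exp (-(k 0) * (t - θ i)) * (I₀ + J₀ (φ (θ i) 0)) else 0))
          - ((∫ s in Set.Iic (t + γ),
            Real.exp (-(k 0) * (t + γ - s)) * g₀ (fun i => φ s 0 - φ s i.succ))
            - ∫ s in Set.Iic t,
            Real.exp (-(k 0) * (t - s)) * g₀ (fun i => φ s 0 - φ s i.succ)) by ring]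
      refine le_trans (absSubLe _ _) ?_
      linarith [hsumbound, hintbound]
    · -- j ≠ 0
      rw [if_neg hj, add_zero]
      have hGcont : Continuous (g j) := by
        apply LipschitzWith.continuous (K := Real.toNNReal (l j))
        apply LipschitzWith.of_dist_le_mul
        intro a b
        rw [Real.coe_toNNReal _ (hl j), Real.dist_eq, Real.dist_eq]
        exact hglip j hj a b
      set F : ℝ → ℝ := fun s =>
        g j (φ (s + γ) 0 - φ (s + γ) j) - g j (φ s 0 - φ s j) with hFdef
      have hFm : Measurable F :=
        (hGcont.measurable.comp ((hφγ 0).sub (hφγ j))).sub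
          (hGcont.measurable.comp ((hφj 0).sub (hφj j)))
      have hFbd : ∀ s, |F s| ≤ 2 * mc j := by
        intro s
        refine (absSubLe _ _).trans ?_
        linarith [hgbd j hj (φ (s + γ) 0 - φ (s + γ) j), hgbd j hj (φ s 0 - φ s j)]
      have hFgood : ∀ s : ℝ, (∀ i : ℤ, ε < |s - θ i|) → |F s| ≤ 2 * l j * (m:ℝ) * ε := by
        intro s hgap
        have hnorm := (hyp2 s hgap).le
        have hcomp : ∀ j' : Fin (m+1), |φ (s + γ) j' - φ s j'| ≤ ε :=
          fun j' => le_trans (abs_le_eNorm (fun j'' => φ (s + γ) j'' - φ s j'') j') hnorm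
        calc |F s| ≤ l j * |(φ (s + γ) 0 - φ (s + γ) j) - (φ s 0 - φ s j)| := hglip j hj _ _
          _ ≤ l j * (2 * ε) := by
              apply mul_le_mul_of_nonneg_left _ (hl j)
              rw [show (φ (s + γ) 0 - φ (s + γ) j) - (φ s 0 - φ s j)
                = (φ (s + γ) 0 - φ s 0) - (φ (s + γ) j - φ s j) by ring]
              refine (absSubLe _ _).trans ?_
              linarith [hcomp 0, hcomp j]
          _ ≤ 2 * l j * (m:ℝ) * ε := by nlinarith [mul_nonneg (mul_nonneg (hl j) hε.le) (sub_nonneg.mpr hm1)]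
      have int1 : MeasureTheory.IntegrableOn
          (fun s => Real.exp (-(k j) * (t - s)) * g j (φ (s + γ) 0 - φ (s + γ) j))
          (Set.Iic t) MeasureTheory.volume :=
        bddmul_integrable (k j) t (hk j) _ (hGcont.measurable.comp ((hφγ 0).sub (hφγ j)))
          (mc j) (fun s => hgbd j hj _)
      have int2 : MeasureTheory.IntegrableOn
          (fun s => Real.exp (-(k j) * (t - s)) * g j (φ s 0 - φ s j))
          (Set.Iic t) MeasureTheory.volume :=
        bddmul_integrable (k j) t (hk j) _ (hGcont.measurable.comp ((hφj 0).sub (hφj j)))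
          (mc j) (fun s => hgbd j hj _)
      simp only [Tmap, if_neg hj]
      have hs1 : (∫ s in Set.Iic (t + γ),
            Real.exp (-(k j) * (t + γ - s)) * g j (φ s 0 - φ s j))
          = ∫ s in Set.Iic t,
            Real.exp (-(k j) * (t - s)) * g j (φ (s + γ) 0 - φ (s + γ) j) := by
        rw [shift_Iic (fun s => Real.exp (-(k j) * (t + γ - s)) * g j (φ s 0 - φ s j)) t γ]
        congr 1
        funext s
        rw [show -(k j) * (t + γ - (s + γ)) = -(k j) * (t - s) by ring]
      rw [hs1, ← MeasureTheory.integral_sub int1 int2]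
      simp_rw [← mul_sub]
      refine le_trans (master_bound ω hω θ hθ (k j) (hk j) ε hε hεω t (mc j)
        (2 * l j * (m:ℝ) * ε) (hmc j) (hδnn j) F hFm hFbd hFgood) ?_
      have hr := hkω j
      have heq : (2 * l j * (m:ℝ) * ε) / k j
          + 2 * mc j * (8 * ε / (1 - Real.exp (-(k j * ω))))
          = (2 * l j * (m:ℝ) / k j + 16 * mc j / (1 - Real.exp (-(k j * ω)))) * ε := by
        field_simp
        ring
      linarith [le_of_eq heq]
  -- final assembly
  calc eNorm (fun j => Tmap m θ k I₀ g₀ g J₀ φ (t + γ) j - Tmap m θ k I₀ g₀ g J₀ φ t j)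
      ≤ ∑ j, |Tmap m θ k I₀ g₀ g J₀ φ (t + γ) j - Tmap m θ k I₀ g₀ g J₀ φ t j| :=
        eNorm_le_sum _
    _ ≤ ∑ j : Fin (m+1), ((2 * l j * (m:ℝ) / k j + 16 * mc j / (1 - Real.exp (-(k j * ω)))) * ε
          + (if j = 0 then ((k 0 * Real.exp (k 0 * ω) * (I₀ + mJ) + lJ)
              * (Real.exp (k 0 * ω) / (1 - Real.exp (-(k 0 * ω))))) * ε else 0)) :=
        Finset.sum_le_sum (fun j _ => key j)
    _ = ((∑ j : Fin (m+1), (2 * l j * (m:ℝ) / k j + 16 * mc j / (1 - Real.exp (-(k j * ω)))))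
          + (k 0 * Real.exp (k 0 * ω) * (I₀ + mJ) + lJ)
          * (Real.exp (k 0 * ω) / (1 - Real.exp (-(k 0 * ω))))) * ε := by
        rw [Finset.sum_add_distrib, ← Finset.sum_mul,
          Finset.sum_ite_eq' Finset.univ (0 : Fin (m+1))
            (fun _ => ((k 0 * Real.exp (k 0 * ω) * (I₀ + mJ) + lJ)
              * (Real.exp (k 0 * ω) / (1 - Real.exp (-(k 0 * ω))))) * ε)]
        simp only [Finset.mem_univ, if_pos]
        ring
end

section
/- Assume in addition that J₀ ≥ 0 everywhere. Then every bounded measurable ξ : ℝ → ℝ^{m+1} with ξ = Tξ satisfies, for all t ∈ ℝ: ξ₀(t) ≥ I₀·e^{−2k₀ω}/(1 − e^{−k₀ω}) − m₀/k₀, |ξ_j(t)| ≤ m_j/k_j for j = 1,…,m, and consequently ξ₀(t) − ξ_j(t) ≥ I₀·e^{−2k₀ω}/(1 − e^{−k₀ω}) − m₀/k₀ − m_j/k_j for each j = 1,…,m. (These are the lower-bound and separation estimates in the proof of Theorem 2; the factor e^{−2k₀ω} is the bound that condition (C4) guarantees for the impulsive sum.) -/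
section helpers
open MeasureTheory Set Filter

lemma exp_kernel_int (κ : ℝ) (hκ : 0 < κ) (t : ℝ) :
    IntegrableOn (fun s => Real.exp (-κ * (t - s))) (Iic t) ∧
    (∫ s in Iic t, Real.exp (-κ * (t - s))) = 1 / κ := by
  have hcont : Continuous (fun s : ℝ => Real.exp (-κ * (t - s))) := by continuity
  have hderiv : ∀ x : ℝ, HasDerivAt (fun s => Real.exp (-κ * (t - s)) / κ)
      (Real.exp (-κ * (t - x))) x := by
    intro x
    have h1 : HasDerivAt (fun s : ℝ => -κ * (t - s)) κ x := by
      simpa using ((hasDerivAt_id x).const_sub t).const_mul (-κ)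
    have h2 := (h1.exp).div_const κ
    refine h2.congr_deriv ?_
    field_simp
  have heq : ∀ a : ℝ, (∫ s in a..t, Real.exp (-κ * (t - s)))
      = 1 / κ - Real.exp (-κ * (t - a)) / κ := by
    intro a
    rw [intervalIntegral.integral_eq_sub_of_hasDerivAt (fun x _ => hderiv x)
      (hcont.intervalIntegrable a t)]
    norm_num
  have habs : (fun s : ℝ => ‖Real.exp (-κ * (t - s))‖) = fun s => Real.exp (-κ * (t - s)) :=
    funext fun s => by rw [Real.norm_eq_abs, abs_of_pos (Real.exp_pos _)]
  have hatBot : Tendsto (fun i : ℕ => t - (i : ℝ)) atTop atBot := by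
    simp_rw [sub_eq_add_neg]
    exact tendsto_atBot_add_const_left atTop t
      (tendsto_neg_atBot_iff.mpr tendsto_natCast_atTop_atTop)
  have hint : IntegrableOn (fun s => Real.exp (-κ * (t - s))) (Iic t) := by
    apply integrableOn_Iic_of_intervalIntegral_norm_bounded (1 / κ) t
      (fun i : ℕ => hcont.integrableOn_Ioc) hatBot
    filter_upwards with i
    rw [show (fun s : ℝ => ‖Real.exp (-κ * (t - s))‖) = fun s => Real.exp (-κ * (t - s)) from habs,
      heq]
    have h1 : 0 < Real.exp (-κ * (t - (t - (i:ℝ)))) / κ := by positivity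
    linarith
  refine ⟨hint, ?_⟩
  have h3 := intervalIntegral_tendsto_integral_Iic t hint hatBot
  have h5 : Tendsto (fun i : ℕ => Real.exp (-κ * (t - (t - (i:ℝ))))) atTop (nhds 0) := by
    have e : (fun i : ℕ => Real.exp (-κ * (t - (t - (i:ℝ)))))
        = fun i : ℕ => Real.exp (-(κ * (i:ℝ))) := by
      funext i; congr 1; ring
    rw [e]
    apply Real.tendsto_exp_atBot.comp
    rw [tendsto_neg_atBot_iff]
    exact tendsto_natCast_atTop_atTop.const_mul_atTop hκ
  have h4 : Tendsto (fun i : ℕ => ∫ s in (t - (i:ℝ))..t, Real.exp (-κ * (t - s)))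
      atTop (nhds (1 / κ)) := by
    simp_rw [heq]
    have := (h5.div_const κ).const_sub (1 / κ)
    simpa using this
  exact tendsto_nhds_unique h3 h4


lemma int_bound (κ M : ℝ) (hκ : 0 < κ) (hM : 0 ≤ M) (t : ℝ) (u : ℝ → ℝ)
    (hu : ∀ s, |u s| ≤ M) :
    |∫ s in Iic t, Real.exp (-κ * (t - s)) * u s| ≤ M / κ := by
  obtain ⟨hker, hkerval⟩ := exp_kernel_int κ hκ t
  by_cases hi : IntegrableOn (fun s => Real.exp (-κ * (t - s)) * u s) (Iic t)
  · have h1 : |∫ s in Iic t, Real.exp (-κ * (t - s)) * u s|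
        ≤ ∫ s in Iic t, ‖Real.exp (-κ * (t - s)) * u s‖ := by
      rw [← Real.norm_eq_abs]
      exact norm_integral_le_integral_norm _
    have h2 : (∫ s in Iic t, ‖Real.exp (-κ * (t - s)) * u s‖)
        ≤ ∫ s in Iic t, Real.exp (-κ * (t - s)) * M := by
      apply integral_mono hi.norm (hker.mul_const M)
      intro s
      show ‖Real.exp (-κ * (t - s)) * u s‖ ≤ Real.exp (-κ * (t - s)) * M
      rw [Real.norm_eq_abs, abs_mul, abs_of_pos (Real.exp_pos _)]
      exact mul_le_mul_of_nonneg_left (hu s) (Real.exp_pos _).le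
    have h3 : (∫ s in Iic t, Real.exp (-κ * (t - s)) * M) = M / κ := by
      rw [integral_mul_const, hkerval]
      field_simp
    linarith
  · rw [integral_undef hi]
    simp only [abs_zero]
    positivity

lemma sum_bound_s9 (κ ω : ℝ) (hκ : 0 < κ) (hω : 0 < ω) (θ : ℤ → ℝ)
    (hθ : ∀ i : ℤ, (i : ℝ) * ω ≤ θ i ∧ θ i < ((i : ℝ) + 1) * ω)
    (I₀ mJ : ℝ) (hI : 0 < I₀) (hmJ : 0 ≤ mJ) (v : ℤ → ℝ)
    (hv0 : ∀ i, 0 ≤ v i) (hvb : ∀ i, v i ≤ mJ) (t : ℝ) :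
    I₀ * Real.exp (-(2 * κ * ω)) / (1 - Real.exp (-κ * ω))
      ≤ ∑' i : ℤ, (if θ i < t then Real.exp (-κ * (t - θ i)) * (I₀ + v i) else 0) := by
  set r := Real.exp (-κ * ω) with hrdef
  have hr0 : 0 < r := Real.exp_pos _
  have hr1 : r < 1 := by
    rw [hrdef, Real.exp_lt_one_iff]
    nlinarith
  set G : ℤ → ℝ := fun i => if θ i < t then Real.exp (-κ * (t - θ i)) * (I₀ + v i) else 0
    with hGdef
  have hGpos : ∀ i, 0 ≤ G i := by
    intro i
    rw [hGdef]
    dsimp only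
    split
    · exact mul_nonneg (Real.exp_pos _).le (by linarith [hv0 i])
    · exact le_refl _
  have hGsum : Summable G := by
    apply Summable.of_nat_of_neg
    · apply summable_of_ne_finset_zero (s := Finset.range (⌈t / ω⌉₊ + 1))
      intro n hn
      have hn' : ⌈t / ω⌉₊ + 1 ≤ n := by simpa [Finset.mem_range, not_lt] using hn
      have h1 : t / ω ≤ (n : ℝ) := le_trans (Nat.le_ceil _) (by exact_mod_cast by omega)
      have h2 : t ≤ (n : ℝ) * ω := by
        rw [div_le_iff₀ hω] at h1
        linarith
      have h3 := (hθ (n : ℤ)).1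
      push_cast at h3
      rw [hGdef]
      dsimp only
      rw [if_neg (not_lt.mpr (by linarith))]
    · apply Summable.of_nonneg_of_le (fun n => hGpos _)
        (f := fun n : ℕ => (I₀ + mJ) * Real.exp (-κ * (t - ω)) * r ^ n)
      · intro n
        rw [hGdef]
        dsimp only
        split
        case isTrue hcond =>
          have hb1 := (hθ (-(n:ℤ))).2
          push_cast at hb1
          have hexp : Real.exp (-κ * (t - θ (-(n:ℤ)))) ≤ Real.exp (-κ * (t - (1 - (n:ℝ)) * ω)) :=
            Real.exp_le_exp.mpr (by nlinarith [mul_le_mul_of_nonneg_left hb1.le hκ.le])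
          have hrth : Real.exp (-κ * (t - (1 - (n:ℝ)) * ω)) = Real.exp (-κ * (t - ω)) * r ^ n := by
            rw [hrdef, ← Real.exp_nat_mul, ← Real.exp_add]
            congr 1
            ring
          calc Real.exp (-κ * (t - θ (-(n:ℤ)))) * (I₀ + v (-(n:ℤ)))
              ≤ Real.exp (-κ * (t - θ (-(n:ℤ)))) * (I₀ + mJ) :=
                mul_le_mul_of_nonneg_left (by linarith [hvb (-(n:ℤ))]) (Real.exp_pos _).le
            _ ≤ (Real.exp (-κ * (t - ω)) * r ^ n) * (I₀ + mJ) := by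
                rw [← hrth]
                exact mul_le_mul_of_nonneg_right hexp (by linarith)
            _ = (I₀ + mJ) * Real.exp (-κ * (t - ω)) * r ^ n := by ring
        case isFalse =>
          have : (0:ℝ) ≤ I₀ + mJ := by linarith
          positivity
      · exact (summable_geometric_of_lt_one hr0.le hr1).mul_left _
  set N : ℤ := ⌊t / ω⌋ - 1 with hNdef
  have hfl : ((⌊t / ω⌋ : ℤ) : ℝ) ≤ t / ω := Int.floor_le _
  have hfl2 : t / ω < (⌊t / ω⌋ : ℝ) + 1 := Int.lt_floor_add_one _
  have hNt : ((N : ℝ) + 1) * ω ≤ t := by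
    have h : ((N : ℝ) + 1) = (⌊t / ω⌋ : ℝ) := by rw [hNdef]; push_cast; ring
    rw [h]
    calc (⌊t / ω⌋:ℝ) * ω ≤ (t/ω) * ω := by nlinarith
      _ = t := by field_simp
  have hNt2 : t < ((N : ℝ) + 2) * ω := by
    have h : ((N : ℝ) + 2) = (⌊t / ω⌋ : ℝ) + 1 := by rw [hNdef]; push_cast; ring
    rw [h]
    calc t = (t/ω) * ω := by field_simp
      _ < ((⌊t/ω⌋:ℝ)+1) * ω := by nlinarith
  set F : ℕ → ℝ := fun n => I₀ * Real.exp (-κ * (t - (N:ℝ) * ω)) * r ^ n with hFdef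
  have hFsum : Summable F := (summable_geometric_of_lt_one hr0.le hr1).mul_left _
  have hinj : Function.Injective (fun n : ℕ => N - (n:ℤ)) := by
    intro a b h
    simp only at h
    omega
  have hFle : ∀ n : ℕ, F n ≤ G (N - n) := by
    intro n
    have hcast : (((N - (n:ℤ)) : ℤ) : ℝ) = (N:ℝ) - (n:ℝ) := by push_cast; ring
    have hcond : θ (N - n) < t := by
      have h2 := (hθ (N - n)).2
      rw [hcast] at h2
      have h3 : ((N:ℝ) - n + 1) * ω ≤ ((N:ℝ) + 1) * ω := by
        nlinarith [Nat.cast_nonneg (α := ℝ) n]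
      linarith
    have h1 := (hθ (N - n)).1
    rw [hcast] at h1
    have hexp : Real.exp (-κ * (t - ((N:ℝ) - n) * ω)) ≤ Real.exp (-κ * (t - θ (N - n))) :=
      Real.exp_le_exp.mpr (by nlinarith [mul_le_mul_of_nonneg_left h1 hκ.le])
    have hsplit : Real.exp (-κ * (t - (N:ℝ)*ω)) * r ^ n
        = Real.exp (-κ * (t - ((N:ℝ) - n) * ω)) := by
      rw [hrdef, ← Real.exp_nat_mul, ← Real.exp_add]
      congr 1
      ring
    rw [hGdef]
    dsimp only
    rw [if_pos hcond]
    calc F n = Real.exp (-κ * (t - ((N:ℝ) - n) * ω)) * I₀ := by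
          rw [hFdef]; dsimp only; rw [← hsplit]; ring
      _ ≤ Real.exp (-κ * (t - θ (N - n))) * (I₀ + v (N - n)) :=
          mul_le_mul hexp (by linarith [hv0 (N - n)]) hI.le (Real.exp_pos _).le
  have hle := Summable.tsum_le_tsum_of_inj _ hinj (fun c _ => hGpos c) hFle hFsum hGsum
  have hFval : ∑' n, F n = I₀ * Real.exp (-κ * (t - (N:ℝ)*ω)) * (1 - r)⁻¹ := by
    rw [hFdef, tsum_mul_left, tsum_geometric_of_lt_one hr0.le hr1]
  have hfinal : I₀ * Real.exp (-(2*κ*ω)) / (1 - r)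
      ≤ I₀ * Real.exp (-κ * (t - (N:ℝ)*ω)) * (1 - r)⁻¹ := by
    rw [div_eq_mul_inv]
    have he : Real.exp (-(2*κ*ω)) ≤ Real.exp (-κ * (t - (N:ℝ)*ω)) :=
      Real.exp_le_exp.mpr (by nlinarith [mul_le_mul_of_nonneg_left hNt2.le hκ.le])
    have h1r : 0 < 1 - r := by linarith
    exact mul_le_mul_of_nonneg_right (mul_le_mul_of_nonneg_left he hI.le) (inv_nonneg.mpr h1r.le)
  calc I₀ * Real.exp (-(2*κ*ω)) / (1 - r) ≤ ∑' n, F n := hFval ▸ hfinal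
    _ ≤ ∑' i, G i := hle

end helpers



/-- Assume in addition `J₀ ≥ 0`. Then every bounded measurable fixed point
`ξ = Tξ` satisfies `ξ₀(t) ≥ I₀·e^{−2k₀ω}/(1 − e^{−k₀ω}) − m₀/k₀`, `|ξ_j(t)| ≤ m_j/k_j`,
and `ξ₀(t) − ξ_j(t) ≥ I₀·e^{−2k₀ω}/(1 − e^{−k₀ω}) − m₀/k₀ − m_j/k_j` (the lower-bound and
separation estimates in the proof of Theorem 2). -/
theorem stmt9
    (m : ℕ) (hm : 1 ≤ m) (ω : ℝ) (hω : 0 < ω) (θ : ℤ → ℝ)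
    (hθ : ∀ i : ℤ, (i : ℝ) * ω ≤ θ i ∧ θ i < ((i : ℝ) + 1) * ω)
    (k : Fin (m + 1) → ℝ) (hk : ∀ j, 0 < k j) (I₀ : ℝ) (hI : 0 < I₀)
    (g₀ : (Fin m → ℝ) → ℝ) (g : Fin (m + 1) → ℝ → ℝ) (J₀ : ℝ → ℝ)
    (l : Fin (m + 1) → ℝ) (lJ : ℝ) (mc : Fin (m + 1) → ℝ) (mJ : ℝ)
    (hl : ∀ j, 0 ≤ l j) (hlJ : 0 ≤ lJ) (hmc : ∀ j, 0 ≤ mc j) (hmJ : 0 ≤ mJ)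
    (hg₀lip : ∀ z w : Fin m → ℝ, |g₀ z - g₀ w| ≤ l 0 * eNorm (fun i => z i - w i))
    (hglip : ∀ j, j ≠ 0 → ∀ a b : ℝ, |g j a - g j b| ≤ l j * |a - b|)
    (hJlip : ∀ a b : ℝ, |J₀ a - J₀ b| ≤ lJ * |a - b|)
    (hg₀bd : ∀ z, |g₀ z| ≤ mc 0)
    (hgbd : ∀ j, j ≠ 0 → ∀ a, |g j a| ≤ mc j)
    (hJbd : ∀ a, |J₀ a| ≤ mJ)
    (hJpos : ∀ a : ℝ, 0 ≤ J₀ a) :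
    ∀ ξ : ℝ → Fin (m + 1) → ℝ,
      (Measurable ξ ∧ (∃ B, ∀ t, eNorm (ξ t) ≤ B) ∧ ∀ t, ξ t = Tmap m θ k I₀ g₀ g J₀ ξ t) →
      ∀ t : ℝ,
        I₀ * Real.exp (-(2 * k 0 * ω)) / (1 - Real.exp (-(k 0) * ω)) - mc 0 / k 0 ≤ ξ t 0 ∧
        (∀ j, j ≠ 0 → |ξ t j| ≤ mc j / k j) ∧
        (∀ j, j ≠ 0 →
          I₀ * Real.exp (-(2 * k 0 * ω)) / (1 - Real.exp (-(k 0) * ω)) - mc 0 / k 0 - mc j / k j ≤ ξ t 0 - ξ t j) := by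
  
  rintro ξ ⟨hmeas, hB, hfix⟩ t
  have hcomp : ∀ j : Fin (m+1), j ≠ 0 → |ξ t j| ≤ mc j / k j := by
    intro j hj
    have h := congrFun (hfix t) j
    rw [h]
    simp only [Tmap, if_neg hj]
    exact int_bound (k j) (mc j) (hk j) (hmc j) t _ (fun s => hgbd j hj _)
  have h0 : I₀ * Real.exp (-(2 * k 0 * ω)) / (1 - Real.exp (-(k 0) * ω)) - mc 0 / k 0 ≤ ξ t 0 := by
    have h := congrFun (hfix t) 0
    rw [h]
    simp only [Tmap]
    rw [if_true]
    have hA := int_bound (k 0) (mc 0) (hk 0) (hmc 0) t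
      (fun s => g₀ (fun i => ξ s 0 - ξ s i.succ)) (fun s => hg₀bd _)
    have hS := sum_bound_s9 (k 0) ω (hk 0) hω θ hθ I₀ mJ hI hmJ (fun i => J₀ (ξ (θ i) 0))
      (fun i => hJpos _) (fun i => le_trans (le_abs_self _) (hJbd _)) t
    have hA' := abs_le.mp hA
    linarith [hA'.1, hA'.2, hS]
  refine ⟨h0, hcomp, fun j hj => ?_⟩
  have h2 := abs_le.mp (hcomp j hj)
  linarith [h2.1, h2.2, h0]
end

section
/- Assume in addition that J₀ ≥ 0 and g_j ≥ 0 everywhere for j = 1,…,m, and that for each j = 1,…,m the constant δ_j := I₀·e^{−2k₀ω}/(1 − e^{−k₀ω}) − m₀/k₀ − m_j/k_j is positive, and that g_j(z) > 0 for every z > 0. Then every bounded measurable ξ : ℝ → ℝ^{m+1} with ξ = Tξ satisfies, for each j = 1,…,m and all t ∈ ℝ: ξ_j(t) ≥ ḡ_j/k_j > 0, where ḡ_j := min{ g_j(z) : δ_j ≤ z ≤ M₀ + m_j/k_j } and M₀ := m₀/k₀ + (I₀ + m_J)·e^{k₀ω}/(1 − e^{−k₀ω}) (the minimum exists and is positive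 since g_j is Lipschitz, hence continuous, and δ_j > 0). -/
open MeasureTheory Set Real Filter Function

section helpers

lemma exp_decay_val {κ : ℝ} (t : ℝ) (hκ : κ ≠ 0) (y : ℝ) :
    ∫ x in y..t, Real.exp (-κ * (t - x)) = (1 - Real.exp (-κ * (t - y)))/κ := by
  have h1 : (∫ x in y..t, Real.exp (-κ * (t - x)))
      = ∫ x in y..t, Real.exp (κ * x + (-κ * t)) := by
    congr 1; ext x; ring_nf
  rw [h1, intervalIntegral.integral_comp_mul_add Real.exp hκ (-κ * t)]
  rw [integral_exp]
  field_simp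
  ring_nf
  have hkk : κ * κ⁻¹ = 1 := mul_inv_cancel₀ hκ
  simp only [Real.exp_zero]
  linear_combination (1 - rexp (-(κ * t) + κ * y)) * hkk

lemma exp_decay_integrable {κ : ℝ} (t : ℝ) (hκ : 0 < κ) :
    IntegrableOn (fun s => Real.exp (-κ * (t - s))) (Set.Iic t) := by
  refine integrableOn_Iic_of_intervalIntegral_norm_bounded (1/κ) t
    (fun y => (Continuous.intervalIntegrable (by continuity) _ _).1) tendsto_id
    (Filter.Eventually.of_forall fun y => ?_)
  have : ∀ x, ‖Real.exp (-κ * (t - x))‖ = Real.exp (-κ * (t - x)) := fun x =>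
    Real.norm_of_nonneg (Real.exp_pos _).le
  simp_rw [this, exp_decay_val t hκ.ne']
  have := Real.exp_pos (-κ * (t - (id y : ℝ)))
  rw [div_le_div_iff₀ hκ hκ]
  nlinarith

lemma exp_decay_integral {κ : ℝ} (t : ℝ) (hκ : 0 < κ) :
    ∫ s in Set.Iic t, Real.exp (-κ * (t - s)) = 1/κ := by
  refine tendsto_nhds_unique
    (intervalIntegral_tendsto_integral_Iic t (exp_decay_integrable t hκ) tendsto_id) ?_
  simp_rw [exp_decay_val t hκ.ne']
  have h : Filter.Tendsto (fun y : ℝ => -κ * (t - y)) atBot atBot := by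
    have : Filter.Tendsto (fun y : ℝ => κ * y + (-κ * t)) atBot atBot :=
      (Filter.tendsto_atBot_add_const_right _ _ (Filter.tendsto_id.const_mul_atBot hκ))
    convert this using 2 with y; ring
  have h2 : Filter.Tendsto (fun y : ℝ => (1 - Real.exp (-κ * (t - y)))/κ) atBot (nhds ((1 - 0)/κ)) :=
    (((Real.tendsto_exp_atBot.comp h).const_sub 1)).div_const κ
  simpa using h2

lemma pulse_bounds (κ ω I₀ mJ t : ℝ) (hκ : 0 < κ) (hω : 0 < ω) (hI : 0 < I₀) (hmJ : 0 ≤ mJ)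
    (θ : ℤ → ℝ) (hθ : ∀ i : ℤ, (i:ℝ)*ω ≤ θ i ∧ θ i < ((i:ℝ)+1)*ω)
    (a : ℤ → ℝ) (ha1 : ∀ i, I₀ ≤ a i) (ha2 : ∀ i, a i ≤ I₀ + mJ) :
    Summable (fun i : ℤ => if θ i < t then Real.exp (-κ * (t - θ i)) * a i else 0) ∧
    I₀ * Real.exp (-(2*κ*ω)) / (1 - Real.exp (-κ*ω)) ≤
      (∑' i : ℤ, if θ i < t then Real.exp (-κ * (t - θ i)) * a i else 0) ∧
    (∑' i : ℤ, if θ i < t then Real.exp (-κ * (t - θ i)) * a i else 0) ≤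
      (I₀+mJ) * Real.exp (κ*ω) / (1 - Real.exp (-κ*ω)) := by
  set f : ℤ → ℝ := fun i => if θ i < t then Real.exp (-κ * (t - θ i)) * a i else 0 with hf
  set r : ℝ := Real.exp (-κ*ω) with hrdef
  have hr0 : 0 < r := Real.exp_pos _
  have hr1 : r < 1 := by
    rw [hrdef, Real.exp_lt_one_iff]; nlinarith
  have h1r : 0 < 1 - r := by linarith
  set i₀ : ℤ := ⌊t/ω⌋ with hi₀
  have hfl : (i₀:ℝ)*ω ≤ t := (le_div_iff₀ hω).mp (Int.floor_le _)
  have hfu : t < ((i₀:ℝ)+1)*ω := (div_lt_iff₀ hω).mp (Int.lt_floor_add_one _)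
  have hnn : ∀ i, 0 ≤ f i := by
    intro i; rw [hf]; dsimp only
    split
    · exact mul_nonneg (Real.exp_pos _).le (le_trans hI.le (ha1 i))
    · exact le_refl 0
  have hzero : ∀ i : ℤ, i₀ < i → f i = 0 := by
    intro i hi
    rw [hf]; dsimp only
    rw [if_neg]
    push_neg
    have h1 : ((i₀:ℝ)+1)*ω ≤ (i:ℝ)*ω := by
      have : ((i₀:ℝ)+1) ≤ (i:ℝ) := by exact_mod_cast hi
      nlinarith
    linarith [(hθ i).1]
  have hinj : Function.Injective (fun n : ℕ => i₀ - (n:ℤ)) := by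
    intro a b h; simpa using h
  have hsupp : Function.support f ⊆ Set.range (fun n : ℕ => i₀ - (n:ℤ)) := by
    intro i hi
    by_cases h : i₀ < i
    · exact absurd (hzero i h) hi
    · refine ⟨(i₀ - i).toNat, ?_⟩
      show i₀ - ((i₀ - i).toNat : ℤ) = i
      omega
  -- upper bound on each term of reindexed sequence
  have hrpow : ∀ n : ℕ, r ^ n = Real.exp (-κ*ω*n) := by
    intro n; rw [hrdef, ← Real.exp_nat_mul]; ring_nf
  have hFle : ∀ n : ℕ, f (i₀ - n) ≤ ((I₀+mJ) * Real.exp (κ*ω)) * r^n := by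
    intro n
    rw [hf]; dsimp only
    split
    · rename_i hlt
      have hcast : ((i₀ - (n:ℤ) : ℤ):ℝ) = (i₀:ℝ) - (n:ℝ) := by push_cast; ring
      have hθub := (hθ (i₀ - n)).2
      rw [hcast] at hθub
      have hexp : Real.exp (-κ * (t - θ (i₀ - n))) ≤ Real.exp (κ*ω) * r^n := by
        rw [hrpow, ← Real.exp_add]
        apply Real.exp_le_exp.mpr
        have h3 : (n:ℝ)*ω - ω ≤ t - θ (i₀ - n) := by nlinarith
        nlinarith [mul_nonneg hκ.le (sub_nonneg.mpr h3)]
      have ha2' := ha2 (i₀ - n)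
      have he := (Real.exp_pos (-κ * (t - θ (i₀ - n)))).le
      nlinarith [Real.exp_pos (κ*ω), pow_pos hr0 n, hI, le_trans hI.le (ha1 (i₀-n))]
    · positivity
  have hgeoS : Summable (fun n : ℕ => ((I₀+mJ) * Real.exp (κ*ω)) * r^n) :=
    (summable_geometric_of_lt_one hr0.le hr1).mul_left _
  have hFs : Summable (fun n : ℕ => f (i₀ - n)) :=
    Summable.of_nonneg_of_le (fun n => hnn _) hFle hgeoS
  have hfs : Summable f := by
    rw [← hinj.summable_iff]
    · exact hFs
    · intro x hx
      apply hzero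
      by_contra h
      refine hx ⟨(i₀ - x).toNat, ?_⟩
      show i₀ - ((i₀ - x).toNat : ℤ) = x
      omega
  refine ⟨hfs, ?_, ?_⟩
  · -- lower bound
    have hLle : ∀ n : ℕ, (I₀ * Real.exp (-(2*κ*ω))) * r^n ≤ f (i₀ - 1 - n) := by
      intro n
      have hcast : ((i₀ - 1 - (n:ℤ) : ℤ):ℝ) = (i₀:ℝ) - 1 - (n:ℝ) := by push_cast; ring
      have hθub := (hθ (i₀ - 1 - n)).2
      have hθlb := (hθ (i₀ - 1 - n)).1
      rw [hcast] at hθub hθlb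
      have hlt : θ (i₀ - 1 - n) < t := by nlinarith [Nat.cast_nonneg (α := ℝ) n]
      rw [hf]; dsimp only; rw [if_pos hlt]
      have hexp : Real.exp (-(2*κ*ω)) * r^n ≤ Real.exp (-κ * (t - θ (i₀ - 1 - n))) := by
        rw [hrpow, ← Real.exp_add]
        apply Real.exp_le_exp.mpr
        have h3 : t - θ (i₀ - 1 - n) ≤ ((n:ℝ)+2)*ω := by nlinarith
        nlinarith [mul_nonneg hκ.le (sub_nonneg.mpr h3)]
      have ha1' := ha1 (i₀ - 1 - n)
      nlinarith [Real.exp_pos (-κ * (t - θ (i₀ - 1 - n))), Real.exp_pos (-(2*κ*ω)), pow_pos hr0 n]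
    have hLS : Summable (fun n : ℕ => (I₀ * Real.exp (-(2*κ*ω))) * r^n) :=
      (summable_geometric_of_lt_one hr0.le hr1).mul_left _
    have hinj' : Function.Injective (fun n : ℕ => i₀ - 1 - (n:ℤ)) := by
      intro a b h; simpa using h
    have := Summable.tsum_le_tsum_of_inj (fun n : ℕ => i₀ - 1 - (n:ℤ)) hinj'
      (fun c _ => hnn c) hLle hLS hfs
    calc I₀ * Real.exp (-(2*κ*ω)) / (1 - r)
        = (I₀ * Real.exp (-(2*κ*ω))) * (1-r)⁻¹ := by ring
      _ = ∑' n : ℕ, (I₀ * Real.exp (-(2*κ*ω))) * r^n := by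
          rw [tsum_mul_left, tsum_geometric_of_lt_one hr0.le hr1]
      _ ≤ ∑' i, f i := this
  · have heq : ∑' n : ℕ, f (i₀ - n) = ∑' i, f i := hinj.tsum_eq hsupp
    rw [← heq]
    calc ∑' n : ℕ, f (i₀ - n) ≤ ∑' n : ℕ, ((I₀+mJ) * Real.exp (κ*ω)) * r^n :=
          Summable.tsum_le_tsum hFle hFs hgeoS
      _ = (I₀+mJ) * Real.exp (κ*ω) * (1-r)⁻¹ := by
          rw [tsum_mul_left, tsum_geometric_of_lt_one hr0.le hr1]
      _ = (I₀+mJ) * Real.exp (κ*ω) / (1 - r) := by ring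

end helpers


/-- Assume in addition `J₀ ≥ 0`, `g_j ≥ 0` with `g_j(z) > 0` for `z > 0`, and
`δ_j := I₀·e^{−2k₀ω}/(1 − e^{−k₀ω}) − m₀/k₀ − m_j/k_j > 0` for each `j = 1,…,m`. Then every
bounded measurable fixed point `ξ = Tξ` satisfies `ξ_j(t) ≥ ḡ_j/k_j > 0`, where
`ḡ_j = min { g_j(z) : δ_j ≤ z ≤ M₀ + m_j/k_j }` and
`M₀ = m₀/k₀ + (I₀ + m_J)·e^{k₀ω}/(1 − e^{−k₀ω})`. -/
theorem stmt10
    (m : ℕ) (hm : 1 ≤ m) (ω : ℝ) (hω : 0 < ω) (θ : ℤ → ℝ)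
    (hθ : ∀ i : ℤ, (i : ℝ) * ω ≤ θ i ∧ θ i < ((i : ℝ) + 1) * ω)
    (k : Fin (m + 1) → ℝ) (hk : ∀ j, 0 < k j) (I₀ : ℝ) (hI : 0 < I₀)
    (g₀ : (Fin m → ℝ) → ℝ) (g : Fin (m + 1) → ℝ → ℝ) (J₀ : ℝ → ℝ)
    (l : Fin (m + 1) → ℝ) (lJ : ℝ) (mc : Fin (m + 1) → ℝ) (mJ : ℝ)
    (hl : ∀ j, 0 ≤ l j) (hlJ : 0 ≤ lJ) (hmc : ∀ j, 0 ≤ mc j) (hmJ : 0 ≤ mJ)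
    (hg₀lip : ∀ z w : Fin m → ℝ, |g₀ z - g₀ w| ≤ l 0 * eNorm (fun i => z i - w i))
    (hglip : ∀ j, j ≠ 0 → ∀ a b : ℝ, |g j a - g j b| ≤ l j * |a - b|)
    (hJlip : ∀ a b : ℝ, |J₀ a - J₀ b| ≤ lJ * |a - b|)
    (hg₀bd : ∀ z, |g₀ z| ≤ mc 0)
    (hgbd : ∀ j, j ≠ 0 → ∀ a, |g j a| ≤ mc j)
    (hJbd : ∀ a, |J₀ a| ≤ mJ)
    (hJpos : ∀ a : ℝ, 0 ≤ J₀ a)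
    (hgpos : ∀ j, j ≠ 0 → ∀ a : ℝ, 0 ≤ g j a)
    (hgpos' : ∀ j, j ≠ 0 → ∀ z : ℝ, 0 < z → 0 < g j z)
    (hδ : ∀ j : Fin (m + 1), j ≠ 0 →
      0 < I₀ * Real.exp (-(2 * k 0 * ω)) / (1 - Real.exp (-(k 0) * ω)) - mc 0 / k 0 - mc j / k j) :
    ∀ ξ : ℝ → Fin (m + 1) → ℝ,
      (Measurable ξ ∧ (∃ B, ∀ t, eNorm (ξ t) ≤ B) ∧ ∀ t, ξ t = Tmap m θ k I₀ g₀ g J₀ ξ t) →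
      ∀ j, j ≠ 0 → ∀ t : ℝ,
        sInf (g j '' Set.Icc (I₀ * Real.exp (-(2 * k 0 * ω)) / (1 - Real.exp (-(k 0) * ω)) - mc 0 / k 0 - mc j / k j)
            ((mc 0 / k 0 + (I₀ + mJ) * Real.exp (k 0 * ω) / (1 - Real.exp (-(k 0) * ω))) + mc j / k j)) / k j ≤ ξ t j ∧
        0 < sInf (g j '' Set.Icc (I₀ * Real.exp (-(2 * k 0 * ω)) / (1 - Real.exp (-(k 0) * ω)) - mc 0 / k 0 - mc j / k j)
            ((mc 0 / k 0 + (I₀ + mJ) * Real.exp (k 0 * ω) / (1 - Real.exp (-(k 0) * ω))) + mc j / k j)) / k j := by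

  intro ξ ⟨hmeas, _hbd, hfix⟩ j hj t
  have h1r : 0 < 1 - Real.exp (-(k 0) * ω) := by
    have : Real.exp (-(k 0) * ω) < 1 := by
      rw [Real.exp_lt_one_iff]; nlinarith [hk 0]
    linarith
  set δ : ℝ := I₀ * Real.exp (-(2 * k 0 * ω)) / (1 - Real.exp (-(k 0) * ω)) - mc 0 / k 0 - mc j / k j with hδdef
  set M₀ : ℝ := mc 0 / k 0 + (I₀ + mJ) * Real.exp (k 0 * ω) / (1 - Real.exp (-(k 0) * ω)) with hM₀def
  set Mj : ℝ := M₀ + mc j / k j with hMjdef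
  have hδpos : 0 < δ := hδ j hj
  have hmc0 : 0 ≤ mc 0 / k 0 := div_nonneg (hmc 0) (hk 0).le
  have hmcj : 0 ≤ mc j / k j := div_nonneg (hmc j) (hk j).le
  have hδM : δ ≤ Mj := by
    have h1 : I₀ * Real.exp (-(2 * k 0 * ω)) ≤ (I₀ + mJ) * Real.exp (k 0 * ω) := by
      have he : Real.exp (-(2 * k 0 * ω)) ≤ Real.exp (k 0 * ω) := by
        apply Real.exp_le_exp.mpr; nlinarith [hk 0]
      nlinarith [Real.exp_pos (-(2 * k 0 * ω))]
    have h2 : I₀ * Real.exp (-(2 * k 0 * ω)) / (1 - Real.exp (-(k 0) * ω))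
        ≤ (I₀ + mJ) * Real.exp (k 0 * ω) / (1 - Real.exp (-(k 0) * ω)) := by
      gcongr
    rw [hδdef, hMjdef, hM₀def]; linarith
  -- continuity of g j
  have hcont : Continuous (g j) := by
    have : LipschitzWith (Real.toNNReal (l j)) (g j) := by
      apply LipschitzWith.of_dist_le_mul
      intro a b
      rw [Real.dist_eq, Real.dist_eq, Real.coe_toNNReal _ (hl j)]
      exact hglip j hj a b
    exact this.continuous
  set S : ℝ := sInf (g j '' Set.Icc δ Mj) with hSdef
  have hSmem : S ∈ g j '' Set.Icc δ Mj :=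
    (isCompact_Icc.image hcont).sInf_mem ((Set.nonempty_Icc.mpr hδM).image _)
  have hSpos : 0 < S := by
    obtain ⟨z, hz, hzS⟩ := hSmem
    rw [← hzS]
    exact hgpos' j hj z (lt_of_lt_of_le hδpos hz.1)
  refine ⟨?_, div_pos hSpos (hk j)⟩
  -- fixed point equations
  have hfixj : ∀ (j' : Fin (m+1)), j' ≠ 0 → ∀ τ : ℝ, ξ τ j' =
      ∫ s in Set.Iic τ, Real.exp (-(k j') * (τ - s)) * g j' (ξ s 0 - ξ s j') := by
    intro j' hj' τ
    have := congrFun (hfix τ) j'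
    rwa [Tmap, if_neg hj'] at this
  have hfix0 : ∀ τ : ℝ, ξ τ 0 =
      -(∫ s in Set.Iic τ, Real.exp (-(k 0) * (τ - s)) * g₀ (fun i => ξ s 0 - ξ s i.succ))
      + ∑' i : ℤ, (if θ i < τ then Real.exp (-(k 0) * (τ - θ i)) * (I₀ + J₀ (ξ (θ i) 0)) else 0) := by
    intro τ
    have := congrFun (hfix τ) 0
    rwa [Tmap, if_pos rfl] at this
  -- generic bound for integrals of exp-decay times bounded function
  have hIbd : ∀ (κ : ℝ) (_ : 0 < κ) (c : ℝ) (_ : 0 ≤ c) (u : ℝ → ℝ) (_ : ∀ s, |u s| ≤ c)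
      (τ : ℝ), |∫ s in Set.Iic τ, Real.exp (-κ * (τ - s)) * u s| ≤ c / κ := by
    intro κ hκ c hc u hu τ
    have h1 : |∫ s in Set.Iic τ, Real.exp (-κ * (τ - s)) * u s|
        ≤ ∫ s in Set.Iic τ, ‖Real.exp (-κ * (τ - s)) * u s‖ := by
      rw [← Real.norm_eq_abs]
      exact norm_integral_le_integral_norm _
    have h2 : (∫ s in Set.Iic τ, ‖Real.exp (-κ * (τ - s)) * u s‖)
        ≤ ∫ s in Set.Iic τ, c * Real.exp (-κ * (τ - s)) := by
      apply integral_mono_of_nonneg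
      · exact Filter.Eventually.of_forall fun s => norm_nonneg _
      · exact (exp_decay_integrable τ hκ).const_mul c
      · apply Filter.Eventually.of_forall
        intro s
        show ‖Real.exp (-κ * (τ - s)) * u s‖ ≤ c * Real.exp (-κ * (τ - s))
        rw [Real.norm_eq_abs, abs_mul, abs_of_pos (Real.exp_pos _), mul_comm c]
        exact mul_le_mul_of_nonneg_left (hu s) (Real.exp_pos _).le
    have h3 : (∫ s in Set.Iic τ, c * Real.exp (-κ * (τ - s))) = c / κ := by
      rw [MeasureTheory.integral_const_mul, exp_decay_integral τ hκ]
      ring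
    linarith
  -- coordinate bounds
  have hbndj : ∀ (j' : Fin (m+1)), j' ≠ 0 → ∀ τ, |ξ τ j'| ≤ mc j' / k j' := by
    intro j' hj' τ
    rw [hfixj j' hj' τ]
    exact hIbd (k j') (hk j') (mc j') (hmc j') _ (fun s => hgbd j' hj' _) τ
  -- tsum bounds
  have hpulse : ∀ τ : ℝ,
      Summable (fun i : ℤ => if θ i < τ then Real.exp (-(k 0) * (τ - θ i)) * (I₀ + J₀ (ξ (θ i) 0)) else 0) ∧
      I₀ * Real.exp (-(2 * k 0 * ω)) / (1 - Real.exp (-(k 0) * ω)) ≤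
        (∑' i : ℤ, if θ i < τ then Real.exp (-(k 0) * (τ - θ i)) * (I₀ + J₀ (ξ (θ i) 0)) else 0) ∧
      (∑' i : ℤ, if θ i < τ then Real.exp (-(k 0) * (τ - θ i)) * (I₀ + J₀ (ξ (θ i) 0)) else 0) ≤
        (I₀ + mJ) * Real.exp (k 0 * ω) / (1 - Real.exp (-(k 0) * ω)) := by
    intro τ
    have h := pulse_bounds (k 0) ω I₀ mJ τ (hk 0) hω hI hmJ θ hθ
      (fun i => I₀ + J₀ (ξ (θ i) 0))
      (fun i => by have := hJpos (ξ (θ i) 0); linarith)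
      (fun i => by have := (abs_le.mp (hJbd (ξ (θ i) 0))).2; linarith)
    exact h
  -- bounds on ξ · 0
  have h0up : ∀ τ, ξ τ 0 ≤ M₀ := by
    intro τ
    rw [hfix0 τ]
    have hi := hIbd (k 0) (hk 0) (mc 0) (hmc 0) (fun s => g₀ (fun i => ξ s 0 - ξ s i.succ)) (fun s => hg₀bd _) τ
    have ht := (hpulse τ).2.2
    rw [hM₀def]
    have := abs_le.mp hi
    linarith [this.1]
  have h0lo : ∀ τ, I₀ * Real.exp (-(2 * k 0 * ω)) / (1 - Real.exp (-(k 0) * ω)) - mc 0 / k 0 ≤ ξ τ 0 := by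
    intro τ
    rw [hfix0 τ]
    have hi := hIbd (k 0) (hk 0) (mc 0) (hmc 0) (fun s => g₀ (fun i => ξ s 0 - ξ s i.succ)) (fun s => hg₀bd _) τ
    have ht := (hpulse τ).2.1
    have := abs_le.mp hi
    linarith [this.2]
  -- difference bounds
  have hdiff : ∀ s, ξ s 0 - ξ s j ∈ Set.Icc δ Mj := by
    intro s
    have h1 := h0lo s
    have h2 := h0up s
    have h3 := abs_le.mp (hbndj j hj s)
    constructor
    · rw [hδdef]; linarith [h3.2]
    · rw [hMjdef]; linarith [h3.1]
  have hSle : ∀ s : ℝ, S ≤ g j (ξ s 0 - ξ s j) := fun s =>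
    csInf_le (isCompact_Icc.image hcont).bddBelow ⟨_, hdiff s, rfl⟩
  -- measurability
  have hm0 : Measurable fun s => ξ s 0 := (measurable_pi_apply 0).comp hmeas
  have hmj : Measurable fun s => ξ s j := (measurable_pi_apply j).comp hmeas
  have hmint : Measurable fun s => Real.exp (-(k j) * (t - s)) * g j (ξ s 0 - ξ s j) := by
    apply Measurable.mul
    · exact (Real.continuous_exp.comp (continuous_const.mul (continuous_const.sub continuous_id))).measurable
    · exact hcont.measurable.comp (hm0.sub hmj)
  have hint : IntegrableOn (fun s => Real.exp (-(k j) * (t - s)) * g j (ξ s 0 - ξ s j)) (Set.Iic t) := by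
    apply Integrable.mono' ((exp_decay_integrable t (hk j)).const_mul (mc j))
      hmint.aestronglyMeasurable
    apply Filter.Eventually.of_forall
    intro s
    rw [Real.norm_eq_abs, abs_mul, abs_of_pos (Real.exp_pos _), mul_comm (mc j)]
    exact mul_le_mul_of_nonneg_left (hgbd j hj _) (Real.exp_pos _).le
  have hlow : IntegrableOn (fun s => Real.exp (-(k j) * (t - s)) * S) (Set.Iic t) :=
    (exp_decay_integrable t (hk j)).mul_const S
  have hmono : (∫ s in Set.Iic t, Real.exp (-(k j) * (t - s)) * S)
      ≤ ∫ s in Set.Iic t, Real.exp (-(k j) * (t - s)) * g j (ξ s 0 - ξ s j) := by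
    apply setIntegral_mono_on hlow hint measurableSet_Iic
    intro s _
    exact mul_le_mul_of_nonneg_left (hSle s) (Real.exp_pos _).le
  have hval : (∫ s in Set.Iic t, Real.exp (-(k j) * (t - s)) * S) = S / k j := by
    rw [MeasureTheory.integral_mul_const, exp_decay_integral t (hk j)]
    ring
  rw [hfixj j hj t, ← hval]
  exact hmono
end

section
/- (Theorem 2, positivity and separation.) Assume √2·L < 1, J₀ ≥ 0 and g_j ≥ 0 everywhere with g_j(z) > 0 for all z > 0 (j = 1,…,m), and m₀/k₀ + m_j/k_j < I₀·e^{−2k₀ω}/(1 − e^{−k₀ω}) for each j = 1,…,m (condition (C8), with e^{−2k₀ω} in place of the paper's e^{−k₀ω}). Then there exist positive real constants ν₁,…,ν_m and μ₀, μ₁,…,μ_m such that the unique bounded measurable solution ξ of ξ = Tξ satisfies, for all t ∈ ℝ and all j = 1,…,m: ξ₀(t) ≥ μ₀ > 0, ξ_j(t) ≥ μ_j > 0, and ξ₀(t) − ξ_j(t) > ν_j. -/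
open MeasureTheory Set

section Helpers

lemma myIntegrableOn_exp (c t : ℝ) (hc : 0 < c) :
    IntegrableOn (fun s => Real.exp (-c * (t - s))) (Set.Iic t) := by
  rw [← Measure.map_neg_eq_self (volume : Measure ℝ)]
  have hme : MeasurableEmbedding fun x : ℝ => -x := (Homeomorph.neg ℝ).measurableEmbedding
  rw [hme.integrableOn_map_iff]
  have h1 : (fun x : ℝ => -x) ⁻¹' (Set.Iic t) = Set.Ici (-t) := by
    ext x; simp
  rw [h1]
  have h2 : IntegrableOn (fun x : ℝ => Real.exp (-c * t) * Real.exp (-c * x)) (Set.Ici (-t)) :=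
    (Iff.mpr integrableOn_Ici_iff_integrableOn_Ioi
      ((exp_neg_integrableOn_Ioi (-t) hc).const_mul _))
  refine (h2.congr_fun (fun x _ => ?_) measurableSet_Ici)
  simp only [Function.comp]
  rw [← Real.exp_add]; ring_nf

lemma myIntegral_exp (c t : ℝ) (hc : 0 < c) :
    ∫ s in Set.Iic t, Real.exp (-c * (t - s)) = 1 / c := by
  have h1 := integral_comp_neg_Iic t (fun y => Real.exp (-c * (t + y)))
  simp only [← sub_eq_add_neg] at h1
  rw [h1]
  have h2 : (∫ x in Set.Ioi (-t), Real.exp (-c * (t + x)))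
      = Real.exp (-c * t) * ∫ x in Set.Ioi (-t), Real.exp (-(c * x)) := by
    rw [← integral_const_mul]
    apply setIntegral_congr_fun measurableSet_Ioi
    intro x _; show Real.exp (-c * (t + x)) = Real.exp (-c * t) * Real.exp (-(c * x))
    rw [← Real.exp_add]; ring_nf
  rw [h2]
  have h3 := integral_comp_mul_left_Ioi (fun y => Real.exp (-y)) (-t) hc
  rw [h3, integral_exp_neg_Ioi, smul_eq_mul,
    show Real.exp (-c*t) * (c⁻¹ * Real.exp (-(c * -t)))
      = (Real.exp (-c*t) * Real.exp (-(c*-t))) * c⁻¹ by ring,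
    ← Real.exp_add, show -c*t + -(c*-t) = 0 by ring, Real.exp_zero, one_mul, one_div]

lemma myIntegral_exp_mul (c t b : ℝ) (hc : 0 < c) :
    ∫ s in Set.Iic t, Real.exp (-c * (t - s)) * b = b / c := by
  rw [integral_mul_const, myIntegral_exp c t hc]; ring

lemma myIntegrableOn_mul {c t b : ℝ} (hc : 0 < c) {h : ℝ → ℝ} (hm : Measurable h)
    (hbd : ∀ s, |h s| ≤ b) :
    IntegrableOn (fun s => Real.exp (-c * (t - s)) * h s) (Set.Iic t) := by
  apply Integrable.mono' ((myIntegrableOn_exp c t hc).const_mul b)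
  · exact ((Real.measurable_exp.comp
      ((measurable_id.const_sub t).const_mul (-c))).mul hm).aestronglyMeasurable
  · filter_upwards with s
    rw [Real.norm_eq_abs, abs_mul, abs_of_pos (Real.exp_pos _)]
    calc Real.exp (-c*(t-s)) * |h s| ≤ Real.exp (-c*(t-s)) * b :=
          mul_le_mul_of_nonneg_left (hbd s) (Real.exp_pos _).le
      _ = b * Real.exp (-c*(t-s)) := mul_comm _ _

lemma myENorm_le {n : ℕ} (z w : Fin n → ℝ) :
    eNorm (fun i => z i - w i) ≤ Real.sqrt n * dist z w := by
  unfold eNorm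
  have h1 : ∀ i, (z i - w i) ^ 2 ≤ (dist z w) ^ 2 := by
    intro i
    have h := dist_le_pi_dist z w i
    rw [Real.dist_eq] at h
    nlinarith [abs_nonneg (z i - w i), sq_abs (z i - w i), dist_nonneg (x := z) (y := w)]
  calc Real.sqrt (∑ j, (z j - w j) ^ 2)
      ≤ Real.sqrt (∑ _j : Fin n, (dist z w) ^ 2) :=
        Real.sqrt_le_sqrt (Finset.sum_le_sum fun i _ => h1 i)
    _ = Real.sqrt ((n : ℝ) * (dist z w) ^ 2) := by
        rw [Finset.sum_const, Finset.card_univ, Fintype.card_fin, nsmul_eq_mul]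
    _ = Real.sqrt n * dist z w := by
        rw [Real.sqrt_mul (Nat.cast_nonneg n), Real.sqrt_sq dist_nonneg]

lemma myCont_of_lip {gf : ℝ → ℝ} {lf : ℝ} (h : ∀ a b, |gf a - gf b| ≤ lf * |a - b|) :
    Continuous gf := by
  apply (LipschitzWith.of_dist_le_mul (K := lf.toNNReal) fun a b => ?_).continuous
  rw [Real.dist_eq, Real.dist_eq, Real.coe_toNNReal']
  exact (h a b).trans (mul_le_mul_of_nonneg_right (le_max_left _ _) (abs_nonneg _))

lemma myCont_g0 {n : ℕ} {g₀ : (Fin n → ℝ) → ℝ} {l0 : ℝ} (hl0 : 0 ≤ l0)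
    (h : ∀ z w, |g₀ z - g₀ w| ≤ l0 * eNorm (fun i => z i - w i)) : Continuous g₀ := by
  apply (LipschitzWith.of_dist_le_mul (K := (l0 * Real.sqrt n).toNNReal)
    fun a b => ?_).continuous
  rw [Real.dist_eq, Real.coe_toNNReal']
  calc |g₀ a - g₀ b| ≤ l0 * eNorm (fun i => a i - b i) := h a b
    _ ≤ l0 * (Real.sqrt n * dist a b) := mul_le_mul_of_nonneg_left (myENorm_le a b) hl0
    _ = (l0 * Real.sqrt n) * dist a b := by ring
    _ ≤ max (l0 * Real.sqrt n) 0 * dist a b :=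
        mul_le_mul_of_nonneg_right (le_max_left _ _) dist_nonneg

lemma myTsum_key (k0 ωv : ℝ) (hk0 : 0 < k0) (hω : 0 < ωv) (θ : ℤ → ℝ)
    (hθ : ∀ i : ℤ, (i : ℝ) * ωv ≤ θ i ∧ θ i < ((i : ℝ) + 1) * ωv)
    (t A B : ℝ) (u : ℤ → ℝ) (hB : 0 ≤ B) (hu : ∀ i, B ≤ u i ∧ u i ≤ A) :
    Summable (fun i : ℤ => if θ i < t then Real.exp (-k0 * (t - θ i)) * u i else 0) ∧
    (∑' i : ℤ, if θ i < t then Real.exp (-k0 * (t - θ i)) * u i else 0)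
      ≤ A * Real.exp (k0 * ωv) / (1 - Real.exp (-k0 * ωv)) ∧
    B * Real.exp (-(2 * k0 * ωv)) / (1 - Real.exp (-k0 * ωv))
      ≤ ∑' i : ℤ, if θ i < t then Real.exp (-k0 * (t - θ i)) * u i else 0 := by
  classical
  set f : ℤ → ℝ := fun i => if θ i < t then Real.exp (-k0 * (t - θ i)) * u i else 0 with hf
  set r : ℝ := Real.exp (-k0 * ωv) with hrdef
  have hr0 : 0 < r := Real.exp_pos _
  have hr1 : r < 1 := Real.exp_lt_one_iff.mpr (by nlinarith)
  have h1r : 0 < 1 - r := by linarith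
  have hA : 0 ≤ A := hB.trans ((hu 0).1.trans (hu 0).2)
  have hfnn : ∀ i, 0 ≤ f i := by
    intro i; simp only [hf]; split
    · exact mul_nonneg (Real.exp_pos _).le (hB.trans (hu i).1)
    · exact le_refl 0
  have hexp_pow : ∀ (x : ℝ) (n : ℕ), Real.exp x * r ^ n = Real.exp (x + n * (-k0 * ωv)) := by
    intro x n
    rw [hrdef, ← Real.exp_nat_mul, ← Real.exp_add]
  set M : ℤ := ⌈t / ωv⌉ - 1 with hM
  have hMr : (M : ℝ) < t / ωv := by
    have := Int.ceil_lt_add_one (t / ωv)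
    push_cast [hM]; push_cast at this; linarith
  have hMt : (M : ℝ) * ωv < t := (lt_div_iff₀ hω).mp hMr
  set e : ℕ → ℤ := fun n => M - n with he_def
  have he : Function.Injective e := by intro a b h; simp only [he_def] at h; omega
  have hsupp : ∀ i, i ∉ Set.range e → f i = 0 := by
    intro i hi
    simp only [hf]
    rw [if_neg]
    intro hit
    apply hi
    have h1 : (i : ℝ) * ωv ≤ θ i := (hθ i).1
    have h2 : (i : ℝ) * ωv < t := lt_of_le_of_lt h1 hit
    have h3 : (i : ℝ) < t / ωv := (lt_div_iff₀ hω).mpr h2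
    have h4 : i < ⌈t / ωv⌉ := Int.lt_ceil.mpr h3
    have h5 : i ≤ M := by omega
    exact ⟨(M - i).toNat, by simp only [he_def]; omega⟩
  have hle : ∀ n : ℕ, f (e n) ≤ A * Real.exp (k0 * ωv) * r ^ n := by
    intro n
    simp only [hf, he_def]
    split
    · rename_i hit
      have h1 := (hθ (M - n)).2
      push_cast at h1
      have h2 : t - θ (M - n) > ((n : ℝ) - 1) * ωv := by nlinarith
      have h3 : Real.exp (-k0 * (t - θ (M - ↑n))) ≤ Real.exp (k0 * ωv) * r ^ n := by
        rw [hexp_pow]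
        apply Real.exp_le_exp.mpr
        nlinarith
      calc Real.exp (-k0 * (t - θ (M - ↑n))) * u (M - ↑n)
          ≤ Real.exp (k0 * ωv) * r ^ n * A := by
            apply mul_le_mul h3 (hu _).2 (hB.trans (hu _).1) (by positivity)
        _ = A * Real.exp (k0 * ωv) * r ^ n := by ring
    · positivity
  have hgsum : Summable (fun n : ℕ => A * Real.exp (k0 * ωv) * r ^ n) :=
    (summable_geometric_of_lt_one hr0.le hr1).mul_left _
  have hfe_sum : Summable (f ∘ e) :=
    Summable.of_nonneg_of_le (fun n => hfnn _) hle hgsum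
  have hfsum : Summable f := (he.summable_iff hsupp).mp hfe_sum
  have htsum_eq : (∑' n : ℕ, f (e n)) = ∑' i : ℤ, f i :=
    he.tsum_eq (Function.support_subset_iff'.mpr hsupp)
  have hupper : tsum f ≤ A * Real.exp (k0 * ωv) / (1 - r) := by
    rw [← htsum_eq]
    calc (∑' n : ℕ, f (e n)) ≤ ∑' n : ℕ, A * Real.exp (k0 * ωv) * r ^ n :=
          Summable.tsum_le_tsum hle hfe_sum hgsum
      _ = A * Real.exp (k0 * ωv) * (1 - r)⁻¹ := by
          rw [tsum_mul_left, tsum_geometric_of_lt_one hr0.le hr1]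
      _ = A * Real.exp (k0 * ωv) / (1 - r) := by rw [div_eq_mul_inv]
  set N : ℤ := ⌊t / ωv⌋ - 1 with hN
  have hN1 : ((N : ℝ) + 1) * ωv ≤ t := by
    have h1 : ((N : ℝ) + 1) = (⌊t / ωv⌋ : ℝ) := by push_cast [hN]; ring
    rw [h1]
    have h2 : (⌊t / ωv⌋ : ℝ) ≤ t / ωv := Int.floor_le _
    calc (⌊t / ωv⌋ : ℝ) * ωv ≤ (t / ωv) * ωv := by nlinarith
      _ = t := by field_simp
  have hN2 : t - (N : ℝ) * ωv < 2 * ωv := by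
    have h1 : t / ωv - 1 < (⌊t / ωv⌋ : ℝ) := Int.sub_one_lt_floor _
    have h2 : (N : ℝ) = (⌊t / ωv⌋ : ℝ) - 1 := by push_cast [hN]; ring
    rw [h2]
    have h3 : t = (t / ωv) * ωv := by field_simp
    nlinarith
  set e' : ℕ → ℤ := fun n => N - n with he'_def
  have he' : Function.Injective e' := by intro a b h; simp only [he'_def] at h; omega
  have hle' : ∀ n : ℕ, B * Real.exp (-(2 * k0 * ωv)) * r ^ n ≤ f (e' n) := by
    intro n
    simp only [hf, he'_def]
    have hθlt : θ (N - n) < t := by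
      have h1 := (hθ (N - n)).2
      push_cast at h1
      have h2 : (((N : ℝ) - n) + 1) * ωv ≤ ((N : ℝ) + 1) * ωv := by
        have h3 : (0 : ℝ) ≤ (n : ℝ) := Nat.cast_nonneg n
        nlinarith
      linarith
    rw [if_pos hθlt]
    have h1 : ((N : ℝ) - n) * ωv ≤ θ (N - n) := by
      have := (hθ (N - n)).1; push_cast at this; linarith
    have h2 : t - θ (N - n) < (2 + n) * ωv := by nlinarith
    have h3 : Real.exp (-(2 * k0 * ωv)) * r ^ n ≤ Real.exp (-k0 * (t - θ (N - ↑n))) := by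
      rw [hexp_pow]
      apply Real.exp_le_exp.mpr
      nlinarith
    calc B * Real.exp (-(2 * k0 * ωv)) * r ^ n
        = (Real.exp (-(2 * k0 * ωv)) * r ^ n) * B := by ring
      _ ≤ Real.exp (-k0 * (t - θ (N - ↑n))) * u (N - n) :=
          mul_le_mul h3 (hu _).1 hB (Real.exp_pos _).le
  have hg'sum : Summable (fun n : ℕ => B * Real.exp (-(2 * k0 * ωv)) * r ^ n) :=
    (summable_geometric_of_lt_one hr0.le hr1).mul_left _
  have hlower : B * Real.exp (-(2 * k0 * ωv)) / (1 - r) ≤ tsum f := by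
    have h1 : (∑' n : ℕ, B * Real.exp (-(2 * k0 * ωv)) * r ^ n) ≤ tsum f :=
      Summable.tsum_le_tsum_of_inj e' he' (fun c _ => hfnn c) hle' hg'sum hfsum
    calc B * Real.exp (-(2 * k0 * ωv)) / (1 - r)
        = B * Real.exp (-(2 * k0 * ωv)) * (1 - r)⁻¹ := by rw [div_eq_mul_inv]
      _ = ∑' n : ℕ, B * Real.exp (-(2 * k0 * ωv)) * r ^ n := by
          rw [tsum_mul_left, tsum_geometric_of_lt_one hr0.le hr1]
      _ ≤ tsum f := h1
  exact ⟨hfsum, hupper, hlower⟩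

end Helpers

/-- Theorem 2, positivity and separation: Assume `√2·L < 1`, `J₀ ≥ 0`,
`g_j ≥ 0` with `g_j(z) > 0` for `z > 0`, and `m₀/k₀ + m_j/k_j < I₀·e^{−2k₀ω}/(1 − e^{−k₀ω})`
for each `j` (condition (C8)). Then there exist positive constants `ν_j` and `μ_j` such that
the unique bounded measurable fixed point `ξ = Tξ` satisfies `ξ₀(t) ≥ μ₀ > 0`,
`ξ_j(t) ≥ μ_j > 0`, and `ξ₀(t) − ξ_j(t) > ν_j` for all `t` and `j = 1,…,m`. -/
theorem stmt11
    (m : ℕ) (hm : 1 ≤ m) (ω : ℝ) (hω : 0 < ω) (θ : ℤ → ℝ)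
    (hθ : ∀ i : ℤ, (i : ℝ) * ω ≤ θ i ∧ θ i < ((i : ℝ) + 1) * ω)
    (k : Fin (m + 1) → ℝ) (hk : ∀ j, 0 < k j) (I₀ : ℝ) (hI : 0 < I₀)
    (g₀ : (Fin m → ℝ) → ℝ) (g : Fin (m + 1) → ℝ → ℝ) (J₀ : ℝ → ℝ)
    (l : Fin (m + 1) → ℝ) (lJ : ℝ) (mc : Fin (m + 1) → ℝ) (mJ : ℝ)
    (hl : ∀ j, 0 ≤ l j) (hlJ : 0 ≤ lJ) (hmc : ∀ j, 0 ≤ mc j) (hmJ : 0 ≤ mJ)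
    (hg₀lip : ∀ z w : Fin m → ℝ, |g₀ z - g₀ w| ≤ l 0 * eNorm (fun i => z i - w i))
    (hglip : ∀ j, j ≠ 0 → ∀ a b : ℝ, |g j a - g j b| ≤ l j * |a - b|)
    (hJlip : ∀ a b : ℝ, |J₀ a - J₀ b| ≤ lJ * |a - b|)
    (hg₀bd : ∀ z, |g₀ z| ≤ mc 0)
    (hgbd : ∀ j, j ≠ 0 → ∀ a, |g j a| ≤ mc j)
    (hJbd : ∀ a, |J₀ a| ≤ mJ)
    (hL : Real.sqrt 2 * Real.sqrt ((l 0 * Real.sqrt (2 * m) / k 0 + lJ * Real.exp (k 0 * ω) / (1 - Real.exp (-(k 0) * ω))) ^ 2 + ∑ i : Fin m, (l i.succ / k i.succ) ^ 2) < 1)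
    (hJpos : ∀ a : ℝ, 0 ≤ J₀ a)
    (hgpos : ∀ j, j ≠ 0 → ∀ a : ℝ, 0 ≤ g j a)
    (hgpos' : ∀ j, j ≠ 0 → ∀ z : ℝ, 0 < z → 0 < g j z)
    (hC8 : ∀ j : Fin (m + 1), j ≠ 0 →
      mc 0 / k 0 + mc j / k j < I₀ * Real.exp (-(2 * k 0 * ω)) / (1 - Real.exp (-(k 0) * ω))) :
    ∃ ν μ : Fin (m + 1) → ℝ, (∀ j, j ≠ 0 → 0 < ν j) ∧ (∀ j, 0 < μ j) ∧
      ∀ ξ : ℝ → Fin (m + 1) → ℝ,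
        (Measurable ξ ∧ (∃ B, ∀ t, eNorm (ξ t) ≤ B) ∧ ∀ t, ξ t = Tmap m θ k I₀ g₀ g J₀ ξ t) →
        ∀ t : ℝ, μ 0 ≤ ξ t 0 ∧ ∀ j, j ≠ 0 → μ j ≤ ξ t j ∧ ν j < ξ t 0 - ξ t j := by
  classical
  have hk0 := hk 0
  have hr0 : (0:ℝ) < Real.exp (-(k 0) * ω) := Real.exp_pos _
  have hr1 : Real.exp (-(k 0) * ω) < 1 := Real.exp_lt_one_iff.mpr (by nlinarith)
  have h1r : 0 < 1 - Real.exp (-(k 0) * ω) := by linarith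
  have hgappos : ∀ j : Fin (m+1), j ≠ 0 →
      0 < I₀ * Real.exp (-(2 * k 0 * ω)) / (1 - Real.exp (-(k 0) * ω))
        - mc 0 / k 0 - mc j / k j := by
    intro j hj
    have h1 := hC8 j hj
    linarith
  have hμ0pos : 0 < I₀ * Real.exp (-(2 * k 0 * ω)) / (1 - Real.exp (-(k 0) * ω))
      - mc 0 / k 0 := by
    have h := hgappos ⟨1, by omega⟩ (by simp [Fin.ext_iff])
    have h2 : 0 ≤ mc ⟨1, by omega⟩ / k ⟨1, by omega⟩ :=
      div_nonneg (hmc _) (hk _).le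
    linarith
  have hcontg : ∀ j : Fin (m+1), j ≠ 0 → Continuous (g j) :=
    fun j hj => myCont_of_lip (hglip j hj)
  -- the separation constants
  set ν : Fin (m+1) → ℝ := fun j =>
    (I₀ * Real.exp (-(2 * k 0 * ω)) / (1 - Real.exp (-(k 0) * ω))
      - mc 0 / k 0 - mc j / k j) / 2 with hνdef
  set C : ℝ := mc 0 / k 0 + (I₀ + mJ) * Real.exp (k 0 * ω)
      / (1 - Real.exp (-(k 0) * ω)) with hCdef
  have hδ : ∀ j : Fin (m+1), ∃ δ : ℝ, 0 < δ ∧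
      (j ≠ 0 → ∀ z ∈ Set.Icc (ν j) (max C (ν j)), δ ≤ g j z) := by
    intro j
    by_cases hj : j = 0
    · exact ⟨1, one_pos, fun h => absurd hj h⟩
    · obtain ⟨x, hxmem, hxmin⟩ := isCompact_Icc.exists_isMinOn
        ⟨ν j, le_refl _, le_max_right _ _⟩ ((hcontg j hj).continuousOn)
      refine ⟨g j x, ?_, fun _ z hz => hxmin hz⟩
      apply hgpos' j hj x
      have h1 := hgappos j hj
      have h2 : 0 < ν j := by rw [hνdef]; dsimp only; linarith
      linarith [hxmem.1]
  choose δ hδpos hδle using hδ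
  refine ⟨ν, fun j => if j = 0 then
      I₀ * Real.exp (-(2 * k 0 * ω)) / (1 - Real.exp (-(k 0) * ω)) - mc 0 / k 0
    else δ j / k j, ?_, ?_, ?_⟩
  · intro j hj
    have h1 := hgappos j hj
    rw [hνdef]; dsimp only; linarith
  · intro j
    by_cases hj : j = 0
    · simpa [hj] using hμ0pos
    · simp only [if_neg hj]
      exact div_pos (hδpos j) (hk j)
  · rintro ξ ⟨hmeasξ, -, hfix⟩
    have hms : ∀ j : Fin (m+1), Measurable fun s => ξ s j :=
      fun j => (measurable_pi_apply j).comp hmeasξ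
    have hmsg : ∀ j : Fin (m+1), j ≠ 0 → Measurable fun s => g j (ξ s 0 - ξ s j) :=
      fun j hj => ((hcontg j hj).measurable).comp ((hms 0).sub (hms j))
    have hcont0 : Continuous g₀ := myCont_g0 (hl 0) hg₀lip
    have hmsg0 : Measurable fun s => g₀ (fun i => ξ s 0 - ξ s i.succ) :=
      hcont0.measurable.comp (measurable_pi_lambda _ fun i => (hms 0).sub (hms i.succ))
    have hInt : ∀ (j : Fin (m+1)) (t : ℝ), j ≠ 0 →
        IntegrableOn (fun s => Real.exp (-(k j) * (t - s)) * g j (ξ s 0 - ξ s j))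
          (Set.Iic t) :=
      fun j t hj => myIntegrableOn_mul (hk j) (hmsg j hj) (fun s => hgbd j hj _)
    have hInt0 : ∀ t : ℝ, IntegrableOn
        (fun s => Real.exp (-(k 0) * (t - s)) * g₀ (fun i => ξ s 0 - ξ s i.succ))
        (Set.Iic t) :=
      fun t => myIntegrableOn_mul hk0 hmsg0 (fun s => hg₀bd _)
    have hrwj : ∀ (t : ℝ) (j : Fin (m+1)), j ≠ 0 →
        ξ t j = ∫ s in Set.Iic t, Real.exp (-(k j) * (t - s)) * g j (ξ s 0 - ξ s j) := by
      intro t j hj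
      conv_lhs => rw [hfix t]
      simp only [Tmap, if_neg hj]
    -- Step 1 : bounds on the compartment coordinates
    have hstep1 : ∀ (t : ℝ) (j : Fin (m+1)), j ≠ 0 →
        0 ≤ ξ t j ∧ ξ t j ≤ mc j / k j := by
      intro t j hj
      constructor
      · rw [hrwj t j hj]
        exact setIntegral_nonneg measurableSet_Iic
          (fun s _ => mul_nonneg (Real.exp_pos _).le (hgpos j hj _))
      · rw [hrwj t j hj]
        calc (∫ s in Set.Iic t, Real.exp (-(k j) * (t - s)) * g j (ξ s 0 - ξ s j))
            ≤ ∫ s in Set.Iic t, Real.exp (-(k j) * (t - s)) * mc j := by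
              apply setIntegral_mono_on (hInt j t hj)
                ((myIntegrableOn_exp (k j) t (hk j)).mul_const _) measurableSet_Iic
              intro s _
              exact mul_le_mul_of_nonneg_left
                ((le_abs_self _).trans (hgbd j hj _)) (Real.exp_pos _).le
          _ = mc j / k j := myIntegral_exp_mul (k j) t (mc j) (hk j)
    -- Step 2 : bounds on the zero coordinate
    have hstep2 : ∀ t : ℝ,
        (I₀ * Real.exp (-(2 * k 0 * ω)) / (1 - Real.exp (-(k 0) * ω)) - mc 0 / k 0)
          ≤ ξ t 0 ∧ ξ t 0 ≤ C := by
      intro t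
      have hrw0 : ξ t 0 =
          -(∫ s in Set.Iic t, Real.exp (-(k 0) * (t - s))
              * g₀ (fun i => ξ s 0 - ξ s i.succ))
          + ∑' i : ℤ, (if θ i < t then
              Real.exp (-(k 0) * (t - θ i)) * (I₀ + J₀ (ξ (θ i) 0)) else 0) := by
        conv_lhs => rw [hfix t]
        simp only [Tmap, if_pos]
      obtain ⟨hsum, hub, hlb⟩ := myTsum_key (k 0) ω hk0 hω θ hθ t (I₀ + mJ) I₀
        (fun i => I₀ + J₀ (ξ (θ i) 0)) hI.le
        (fun i => ⟨le_add_of_nonneg_right (hJpos _),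
          add_le_add_right ((le_abs_self _).trans (hJbd _)) I₀⟩)
      have hIbd1 : (∫ s in Set.Iic t, Real.exp (-(k 0) * (t - s))
            * g₀ (fun i => ξ s 0 - ξ s i.succ)) ≤ mc 0 / k 0 := by
        calc (∫ s in Set.Iic t, Real.exp (-(k 0) * (t - s))
              * g₀ (fun i => ξ s 0 - ξ s i.succ))
            ≤ ∫ s in Set.Iic t, Real.exp (-(k 0) * (t - s)) * mc 0 := by
              apply setIntegral_mono_on (hInt0 t)
                ((myIntegrableOn_exp (k 0) t hk0).mul_const _) measurableSet_Iic
              intro s _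
              exact mul_le_mul_of_nonneg_left
                ((le_abs_self _).trans (hg₀bd _)) (Real.exp_pos _).le
          _ = mc 0 / k 0 := myIntegral_exp_mul (k 0) t (mc 0) hk0
      have hIbd2 : -(mc 0 / k 0) ≤ (∫ s in Set.Iic t, Real.exp (-(k 0) * (t - s))
            * g₀ (fun i => ξ s 0 - ξ s i.succ)) := by
        calc -(mc 0 / k 0) = -(mc 0) / k 0 := by ring
          _ = ∫ s in Set.Iic t, Real.exp (-(k 0) * (t - s)) * (-(mc 0)) :=
              (myIntegral_exp_mul (k 0) t (-(mc 0)) hk0).symm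
          _ ≤ ∫ s in Set.Iic t, Real.exp (-(k 0) * (t - s))
              * g₀ (fun i => ξ s 0 - ξ s i.succ) := by
              apply setIntegral_mono_on
                ((myIntegrableOn_exp (k 0) t hk0).mul_const _) (hInt0 t) measurableSet_Iic
              intro s _
              apply mul_le_mul_of_nonneg_left _ (Real.exp_pos _).le
              have := hg₀bd (fun i => ξ s 0 - ξ s i.succ)
              have habs := neg_abs_le (g₀ (fun i => ξ s 0 - ξ s i.succ))
              linarith
      rw [hrw0, hCdef]
      constructor <;> [skip; skip] <;> linarith
    -- Conclusion
    intro t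
    constructor
    · have h := (hstep2 t).1
      simpa using h
    · intro j hj
      have hgapt : ∀ s : ℝ, ν j < ξ s 0 - ξ s j := by
        intro s
        have h1 := (hstep2 s).1
        have h2 := (hstep1 s j hj).2
        have h3 := hgappos j hj
        rw [hνdef]; dsimp only; linarith
      refine ⟨?_, hgapt t⟩
      simp only [if_neg hj]
      rw [hrwj t j hj]
      calc δ j / k j
          = ∫ s in Set.Iic t, Real.exp (-(k j) * (t - s)) * δ j :=
            (myIntegral_exp_mul (k j) t (δ j) (hk j)).symm
        _ ≤ ∫ s in Set.Iic t, Real.exp (-(k j) * (t - s)) * g j (ξ s 0 - ξ s j) := by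
            apply setIntegral_mono_on
              ((myIntegrableOn_exp (k j) t (hk j)).mul_const _) (hInt j t hj)
              measurableSet_Iic
            intro s _
            apply mul_le_mul_of_nonneg_left _ (Real.exp_pos _).le
            apply hδle j hj
            constructor
            · exact (hgapt s).le
            · have h1 := (hstep1 s j hj).1
              have h2 := (hstep2 s).2
              have h3 : ξ s 0 - ξ s j ≤ C := by linarith
              exact h3.trans (le_max_left _ _)
end
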